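/- arXiv:math/0508196 — 8 statements merged into one kernel-verified Lean document; each statement's English description precedes it below -/
import Mathlib

section
/- In the integral group ring of the generalized quaternion group Q_{4n} = ⟨x, y | x^n = y^2, y x y^{-1} = x^{-1}⟩, the left ideal P generated by a+by and x+1 (for integers a, b) is a two-sided ideal. -/
open MonoidAlgebra

abbrev QR (n : ℕ) : Type := MonoidAlgebra ℤ (QuaternionGroup n)

noncomputable def Xq (n : ℕ) : QR n := of ℤ (QuaternionGroup n) (QuaternionGroup.a 1)
noncomputable def Yq (n : ℕ) : QR n := of ℤ (QuaternionGroup n) (QuaternionGroup.xa 0)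

noncomputable def Pideal (n : ℕ) (a b : ℤ) : Ideal (QR n) :=
  Ideal.span {(a : QR n) + (b : QR n) * Yq n, Xq n + 1}

namespace QuatProofAux

open QuaternionGroup in
lemma dummy_open : True := trivial

noncomputable abbrev of' (n : ℕ) : QuaternionGroup n →* QR n := of ℤ (QuaternionGroup n)

/-- `J` is the left ideal generated by `X + 1`. -/
noncomputable def J (n : ℕ) : Ideal (QR n) := Ideal.span {Xq n + 1}

lemma J_le_P (n : ℕ) (a b : ℤ) : J n ≤ Pideal n a b :=
  Ideal.span_mono (by intro z hz; right; exact hz)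

lemma X_sq_sub_one_mem (n : ℕ) : Xq n ^ 2 - 1 ∈ J n := by
  have h : Xq n ^ 2 - 1 = (Xq n - 1) * (Xq n + 1) := by noncomm_ring
  rw [h]
  exact Ideal.mul_mem_left _ _ (Ideal.subset_span rfl)

lemma X_pow_even_sub_one_mem (n : ℕ) (m : ℕ) : Xq n ^ (2 * m) - 1 ∈ J n := by
  induction m with
  | zero => simpa using (J n).zero_mem
  | succ m ih =>
      have h : Xq n ^ (2 * (m + 1)) - 1
          = Xq n ^ (2 * m) * (Xq n ^ 2 - 1) + (Xq n ^ (2 * m) - 1) := by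
        rw [show 2*(m+1) = 2*m+2 from by ring, pow_add]; noncomm_ring
      rw [h]
      exact (J n).add_mem (Ideal.mul_mem_left _ _ (X_sq_sub_one_mem n)) ih

lemma a_double_sub_one_mem (n : ℕ) (i : ZMod (2 * n)) :
    of' n (QuaternionGroup.a (i + i)) - 1 ∈ J n := by
  obtain ⟨k, hk⟩ : ∃ k : ℤ, (k : ZMod (2 * n)) = i := ⟨ZMod.cast i, ZMod.intCast_zmod_cast i⟩
  have hof : ∀ m : ℕ, of' n (QuaternionGroup.a ((2 * m : ℕ) : ZMod (2 * n))) = Xq n ^ (2 * m) := by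
    intro m
    rw [Xq, ← map_pow, QuaternionGroup.a_one_pow]
  rcases le_or_gt 0 k with hk0 | hk0
  · have hcast : ((k.toNat : ℕ) : ZMod (2 * n)) = i := by
      rw [← Int.cast_natCast, Int.toNat_of_nonneg hk0, hk]
    have he : i + i = ((2 * k.toNat : ℕ) : ZMod (2 * n)) := by
      push_cast
      rw [hcast]; ring
    rw [he, hof]
    exact X_pow_even_sub_one_mem n _
  · have hcast : (((-k).toNat : ℕ) : ZMod (2 * n)) = -i := by
      rw [← Int.cast_natCast, Int.toNat_of_nonneg (by omega : (0:ℤ) ≤ -k), Int.cast_neg, hk]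
    have he : -(i + i) = ((2 * (-k).toNat : ℕ) : ZMod (2 * n)) := by
      push_cast
      rw [hcast]; ring
    set j : ZMod (2 * n) := ((2 * (-k).toNat : ℕ) : ZMod (2 * n)) with hj
    have hii : i + i = -j := by rw [← he]; ring
    have hmul : of' n (QuaternionGroup.a (-j)) * of' n (QuaternionGroup.a j) = 1 := by
      rw [← map_mul, QuaternionGroup.a_mul_a, neg_add_cancel, ← QuaternionGroup.one_def, map_one]
    have hrw : of' n (QuaternionGroup.a (i + i)) - 1
        = (-(of' n (QuaternionGroup.a (-j)))) * (of' n (QuaternionGroup.a j) - 1) := by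
      rw [hii, neg_mul, mul_sub, hmul, mul_one, neg_sub]
    rw [hrw]
    refine Ideal.mul_mem_left _ _ ?_
    rw [hj, hof]
    exact X_pow_even_sub_one_mem n _

variable {n : ℕ} {a b : ℤ}

lemma X1_mem : Xq n + 1 ∈ Pideal n a b :=
  Ideal.subset_span (Set.mem_insert_of_mem _ rfl)

lemma G1_mem : (a : QR n) + (b : QR n) * Yq n ∈ Pideal n a b :=
  Ideal.subset_span (Set.mem_insert _ _)

lemma P_zsmul_mem {x : QR n} (c : ℤ) (hx : x ∈ Pideal n a b) : c • x ∈ Pideal n a b := by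
  simpa [zsmul_eq_mul] using Ideal.mul_mem_left _ (c : QR n) hx

lemma X1_mul_of_mem (g : QuaternionGroup n) :
    (Xq n + 1) * of' n g ∈ Pideal n a b := by
  cases g with
  | a i =>
      have key : (Xq n + 1) * of' n (QuaternionGroup.a i) = of' n (QuaternionGroup.a i) * (Xq n + 1) := by
        simp only [Xq, add_mul, mul_add, one_mul, mul_one, ← map_mul, QuaternionGroup.a_mul_a]
        rw [add_comm (1 : ZMod (2*n)) i]
      rw [key]
      exact Ideal.mul_mem_left _ _ X1_mem
  | xa i =>
      have key : (Xq n + 1) * of' n (QuaternionGroup.xa i) = of' n (QuaternionGroup.xa (i - 1)) * (Xq n + 1) := by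
        simp only [Xq, add_mul, mul_add, one_mul, mul_one, ← map_mul, QuaternionGroup.a_mul_xa, QuaternionGroup.xa_mul_a,
          sub_add_cancel]
        abel
      rw [key]
      exact Ideal.mul_mem_left _ _ X1_mem

lemma G1_mul_of_mem (g : QuaternionGroup n) :
    ((a : QR n) + (b : QR n) * Yq n) * of' n g ∈ Pideal n a b := by
  have hsa : (a : QR n) = a • (1 : QR n) := by simp [zsmul_eq_mul]
  have hsb : (b : QR n) * Yq n = b • Yq n := by simp [zsmul_eq_mul]
  cases g with
  | a i =>
      have e1 : Yq n * of' n (QuaternionGroup.a i) = of' n (QuaternionGroup.xa i) := by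
        rw [Yq, ← map_mul, QuaternionGroup.xa_mul_a, zero_add]
      have e2 : of' n (QuaternionGroup.a i) * Yq n = of' n (QuaternionGroup.xa (-i)) := by
        rw [Yq, ← map_mul, QuaternionGroup.a_mul_xa, zero_sub]
      have e3 : of' n (QuaternionGroup.xa (-i)) * of' n (QuaternionGroup.a (i + i)) = of' n (QuaternionGroup.xa i) := by
        rw [← map_mul, QuaternionGroup.xa_mul_a]; congr 1; ring
      have key : ((a : QR n) + (b : QR n) * Yq n) * of' n (QuaternionGroup.a i)
          = of' n (QuaternionGroup.a i) * ((a : QR n) + (b : QR n) * Yq n)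
            + b • (of' n (QuaternionGroup.xa (-i)) * (of' n (QuaternionGroup.a (i + i)) - 1)) := by
        rw [hsa, hsb]
        simp only [add_mul, mul_add, smul_mul_assoc, mul_smul_comm, one_mul, mul_one,
          mul_sub, smul_sub, e1, e2, e3]
        abel
      rw [key]
      refine (Pideal n a b).add_mem (Ideal.mul_mem_left _ _ G1_mem) ?_
      exact P_zsmul_mem b (Ideal.mul_mem_left _ _ (J_le_P n a b (a_double_sub_one_mem n i)))
  | xa i =>
      have e1 : Yq n * of' n (QuaternionGroup.xa i) = of' n (QuaternionGroup.a ((n : ZMod (2*n)) + i)) := by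
        rw [Yq, ← map_mul, QuaternionGroup.xa_mul_xa]; congr 1; ring
      have e2 : of' n (QuaternionGroup.xa i) * Yq n = of' n (QuaternionGroup.a ((n : ZMod (2*n)) - i)) := by
        rw [Yq, ← map_mul, QuaternionGroup.xa_mul_xa]; congr 1; ring
      have e3 : of' n (QuaternionGroup.a ((n : ZMod (2*n)) - i)) * of' n (QuaternionGroup.a (i + i))
          = of' n (QuaternionGroup.a ((n : ZMod (2*n)) + i)) := by
        rw [← map_mul, QuaternionGroup.a_mul_a]; congr 1; ring
      have key : ((a : QR n) + (b : QR n) * Yq n) * of' n (QuaternionGroup.xa i)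
          = of' n (QuaternionGroup.xa i) * ((a : QR n) + (b : QR n) * Yq n)
            + b • (of' n (QuaternionGroup.a ((n : ZMod (2*n)) - i))
                * (of' n (QuaternionGroup.a (i + i)) - 1)) := by
        rw [hsa, hsb]
        simp only [add_mul, mul_add, smul_mul_assoc, mul_smul_comm, one_mul, mul_one,
          mul_sub, smul_sub, e1, e2, e3]
        abel
      rw [key]
      refine (Pideal n a b).add_mem (Ideal.mul_mem_left _ _ G1_mem) ?_
      exact P_zsmul_mem b (Ideal.mul_mem_left _ _ (J_le_P n a b (a_double_sub_one_mem n i)))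

lemma gen_mul_mem {p : QR n} (hp : p ∈ ({(a : QR n) + (b : QR n) * Yq n, Xq n + 1} : Set (QR n)))
    (r : QR n) : p * r ∈ Pideal n a b := by
  induction r using MonoidAlgebra.induction_on with
  | of g =>
      rcases hp with hp | hp
      · rw [hp]; exact G1_mul_of_mem g
      · rw [hp]; exact X1_mul_of_mem g
  | add f g hf hg => rw [mul_add]; exact (Pideal n a b).add_mem hf hg
  | smul c f hf => rw [mul_smul_comm]; exact P_zsmul_mem c hf

end QuatProofAux

theorem stmt0 (n : ℕ) (a b : ℤ) :
    ∀ p ∈ Pideal n a b, ∀ r : QR n, p * r ∈ Pideal n a b := by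
  intro p hp
  refine Submodule.span_induction ?_ ?_ ?_ ?_ hp
  · intro x hx r
    exact QuatProofAux.gen_mul_mem hx r
  · intro r; simp
  · intro x y hx hy ihx ihy r
    rw [add_mul]; exact (Pideal n a b).add_mem (ihx r) (ihy r)
  · intro c x hx ihx r
    rw [smul_eq_mul, mul_assoc]
    exact Ideal.mul_mem_left _ _ (ihx r)
end

section
/- Let P = ⟨a+by, x+1⟩ be the left ideal of ZQ_{4n} as above, d = gcd(a,b), and k = a²+b² if n is odd, k = a²-b² if n is even, with t = k/d. Then the quotient abelian group ZQ_{4n}/P is isomorphic to Z/tZ ⊕ Z/dZ. -/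
open MonoidAlgebra

section Aux

open AddSubgroup QuaternionGroup

/-! ### A sign character on `ZMod (2*n)` -/

noncomputable def sgn (n : ℕ) (i : ZMod (2*n)) : ℤ :=
  if ZMod.castHom ⟨n, rfl⟩ (ZMod 2) i = 0 then 1 else -1

lemma sgn_add (n : ℕ) (i j : ZMod (2*n)) : sgn n (i + j) = sgn n i * sgn n j := by
  unfold sgn
  rw [map_add]
  generalize ZMod.castHom ⟨n, rfl⟩ (ZMod 2) i = u
  generalize ZMod.castHom ⟨n, rfl⟩ (ZMod 2) j = v
  revert u v; decide

lemma sgn_zero (n : ℕ) : sgn n 0 = 1 := by simp [sgn]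

lemma sgn_one (n : ℕ) : sgn n 1 = -1 := by
  simp only [sgn, map_one]; norm_num

lemma sgn_mul_self (n : ℕ) (i : ZMod (2*n)) : sgn n i * sgn n i = 1 := by
  unfold sgn; split <;> norm_num

lemma sgn_neg (n : ℕ) (i : ZMod (2*n)) : sgn n (-i) = sgn n i := by
  have h1 : sgn n (-i) * sgn n i = 1 := by rw [← sgn_add]; simp [sgn_zero]
  have h2 := sgn_mul_self n i
  have h3 : sgn n (-i) * sgn n i = sgn n i * sgn n i := by rw [h1, h2]
  exact mul_right_cancel₀ (by unfold sgn; split <;> norm_num) h3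

lemma sgn_natCast_n (n : ℕ) : sgn n ((n : ZMod (2*n))) = if Odd n then -1 else 1 := by
  unfold sgn
  rw [map_natCast]
  by_cases h : Odd n
  · rw [if_neg, if_pos h]
    rw [ZMod.natCast_eq_zero_iff]
    rw [Nat.odd_iff] at h; omega
  · rw [if_pos, if_neg h]
    rw [ZMod.natCast_eq_zero_iff]
    rw [Nat.odd_iff] at h; omega

/-! ### Lattice quotient machinery -/

noncomputable def prodQuot {A B : Type*} [AddCommGroup A] [AddCommGroup B]
    (H : AddSubgroup A) (K : AddSubgroup B) :
    (A × B) ⧸ (H.prod K) ≃+ (A ⧸ H) × (B ⧸ K) := by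
  refine (QuotientAddGroup.quotientAddEquivOfEq ?_).trans
    (QuotientAddGroup.quotientKerEquivOfSurjective
      (AddMonoidHom.prodMap (QuotientAddGroup.mk' H) (QuotientAddGroup.mk' K)) ?_)
  · ext ⟨x, y⟩
    simp [AddSubgroup.mem_prod, AddMonoidHom.mem_ker, Prod.ext_iff,
      QuotientAddGroup.eq_zero_iff]
  · rintro ⟨x, y⟩
    obtain ⟨x', hx⟩ := QuotientAddGroup.mk'_surjective H x
    obtain ⟨y', hy⟩ := QuotientAddGroup.mk'_surjective K y
    exact ⟨(x', y'), by simp [Prod.ext_iff, hx, hy]; exact ⟨hx, hy⟩⟩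

lemma closure_pair_prod (p q : ℤ) :
    AddSubgroup.closure {((p, 0) : ℤ × ℤ), (0, q)} = (zmultiples p).prod (zmultiples q) := by
  apply le_antisymm
  · rw [closure_le]
    rintro z (rfl | rfl)
    · exact ⟨mem_zmultiples _, zero_mem _⟩
    · exact ⟨zero_mem _, mem_zmultiples _⟩
  · rintro ⟨x, y⟩ ⟨⟨c, rfl⟩, ⟨e, rfl⟩⟩
    have h : (c • p, e • q) = c • ((p, 0) : ℤ × ℤ) + e • ((0, q) : ℤ × ℤ) := by
      simp [Prod.ext_iff, smul_eq_mul]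
    rw [h]
    exact add_mem (zsmul_mem (subset_closure (by simp)) c)
      (zsmul_mem (subset_closure (by simp)) e)

lemma closure_pair_shear (p q α : ℤ) :
    AddSubgroup.closure {((p, 0) : ℤ × ℤ), (p * α, q)} =
      AddSubgroup.closure {((p, 0) : ℤ × ℤ), (0, q)} := by
  apply le_antisymm <;> rw [closure_le] <;> rintro z (rfl | rfl)
  · exact subset_closure (by simp)
  · have h : ((p * α, q) : ℤ × ℤ) = α • ((p, 0) : ℤ × ℤ) + (0, q) := by
      simp [Prod.ext_iff]; ring
    rw [h]
    exact add_mem (zsmul_mem (subset_closure (by simp)) α) (subset_closure (by simp))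
  · exact subset_closure (by simp)
  · have h : ((0, q) : ℤ × ℤ) = (p * α, q) + (-α) • ((p, 0) : ℤ × ℤ) := by
      simp [Prod.ext_iff]; ring
    rw [h]
    exact add_mem (subset_closure (by simp)) (zsmul_mem (subset_closure (by simp)) (-α))

def shearEquiv (a' b' u v : ℤ) (hbez : a' * u + b' * v = 1) : (ℤ × ℤ) ≃+ ℤ × ℤ where
  toFun p := (u * p.1 + v * p.2, -b' * p.1 + a' * p.2)
  invFun p := (a' * p.1 - v * p.2, b' * p.1 + u * p.2)
  left_inv := by
    rintro ⟨x, y⟩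
    refine Prod.ext ?_ ?_ <;> simp only
    · linear_combination x * hbez
    · linear_combination y * hbez
  right_inv := by
    rintro ⟨x, y⟩
    refine Prod.ext ?_ ?_ <;> simp only
    · linear_combination x * hbez
    · linear_combination y * hbez
  map_add' := by
    rintro ⟨x1, y1⟩ ⟨x2, y2⟩
    refine Prod.ext ?_ ?_ <;> simp only [Prod.fst_add, Prod.snd_add] <;> ring

@[simp] lemma shearEquiv_apply (a' b' u v : ℤ) (hbez : a' * u + b' * v = 1) (p : ℤ × ℤ) :
    shearEquiv a' b' u v hbez p = (u * p.1 + v * p.2, -b' * p.1 + a' * p.2) := rfl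

lemma part2 (a b ε : ℤ) (d t : ℕ) (hd : d = Int.gcd a b)
    (ht : t = ((a ^ 2 - ε * b ^ 2) / (d : ℤ)).natAbs) :
    Nonempty ((ℤ × ℤ) ⧸ AddSubgroup.closure {((a, b) : ℤ × ℤ), (ε * b, a)} ≃+
      ZMod t × ZMod d) := by
  have key : ∃ e : (ℤ × ℤ) ≃+ ℤ × ℤ,
      (AddSubgroup.closure {((a, b) : ℤ × ℤ), (ε * b, a)}).map e.toAddMonoidHom =
        (zmultiples ((d : ℕ) : ℤ)).prod (zmultiples ((t : ℕ) : ℤ)) := by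
    by_cases hd0 : d = 0
    · subst hd0
      obtain ⟨ha, hb⟩ : a = 0 ∧ b = 0 := by
        rw [← Int.gcd_eq_zero_iff]; omega
      subst ha; subst hb
      have ht0 : t = 0 := by simp at ht; exact ht
      subst ht0
      refine ⟨AddEquiv.refl _, ?_⟩
      rw [show (AddEquiv.refl (ℤ × ℤ)).toAddMonoidHom = AddMonoidHom.id _ from rfl,
        AddSubgroup.map_id]
      · simp only [mul_zero, Set.pair_eq_singleton, Nat.cast_zero, zmultiples_zero_eq_bot]
        rw [Prod.mk_zero_zero, AddSubgroup.closure_singleton_zero]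
        ext ⟨x, y⟩
        simp [AddSubgroup.mem_prod, Prod.ext_iff]
    · have hdz : ((d : ℕ) : ℤ) ≠ 0 := by exact_mod_cast hd0
      have hpos : 0 < Int.gcd a b := by omega
      set a' : ℤ := a / (d : ℤ) with ha'
      set b' : ℤ := b / (d : ℤ) with hb'
      have ha : a = (d : ℤ) * a' := by
        rw [ha', Int.mul_ediv_cancel' (by rw [hd]; exact Int.gcd_dvd_left _ _)]
      have hb : b = (d : ℤ) * b' := by
        rw [hb', Int.mul_ediv_cancel' (by rw [hd]; exact Int.gcd_dvd_right _ _)]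
      have hcop : Int.gcd a' b' = 1 := by
        rw [ha', hb', hd]; exact Int.gcd_div_gcd_div_gcd hpos
      set u : ℤ := Int.gcdA a' b' with hu
      set v : ℤ := Int.gcdB a' b' with hv
      have hbez : a' * u + b' * v = 1 := by
        have h := Int.gcd_eq_gcd_ab a' b'
        rw [hcop] at h
        exact_mod_cast h.symm
      set α : ℤ := u * ε * b' + v * a' with hα
      set m : ℤ := a' ^ 2 - ε * b' ^ 2 with hm
      have htm : ((t : ℕ) : ℤ) = ((d : ℤ) * m).natAbs := by
        rw [ht]
        congr 1
        have h : a ^ 2 - ε * b ^ 2 = (d : ℤ) * ((d : ℤ) * m) := by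
          rw [ha, hb, hm]; ring
        rw [h, Int.mul_ediv_cancel_left _ hdz]
      refine ⟨shearEquiv a' b' u v hbez, ?_⟩
      rw [AddMonoidHom.map_closure]
      rw [Set.image_insert_eq, Set.image_singleton]
      have h1 : shearEquiv a' b' u v hbez (a, b) = (((d : ℕ) : ℤ), 0) := by
        rw [shearEquiv_apply]
        refine Prod.ext ?_ ?_ <;> simp only
        · linear_combination u * ha + v * hb + ((d : ℕ) : ℤ) * hbez
        · linear_combination (-b') * ha + a' * hb
      have h2 : shearEquiv a' b' u v hbez (ε * b, a) = (((d : ℕ) : ℤ) * α, (d : ℤ) * m) := by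
        rw [shearEquiv_apply]
        refine Prod.ext ?_ ?_ <;> simp only
        · linear_combination (u * ε) * hb + v * ha
        · linear_combination a' * ha + (-b' * ε) * hb
      simp only [AddEquiv.toAddMonoidHom_eq_coe, AddMonoidHom.coe_coe]
      rw [h1, h2, closure_pair_shear, closure_pair_prod]
      congr 1
      rw [htm, Int.zmultiples_natAbs]
  obtain ⟨e, he⟩ := key
  exact ⟨(QuotientAddGroup.congr _ _ e he).trans ((prodQuot _ _).trans
    (((Int.quotientZMultiplesNatEquivZMod d).prodCongr
      (Int.quotientZMultiplesNatEquivZMod t)).trans (AddEquiv.prodComm)))⟩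

/-! ### The group-algebra side -/

lemma a_sub (n : ℕ) (i : ZMod (2*n)) :
    ∃ q : QR n, of ℤ (QuaternionGroup n) (QuaternionGroup.a i)
      = sgn n i • (1 : QR n) + q * (Xq n + 1) := by
  obtain ⟨z, rfl⟩ := ZMod.intCast_surjective i
  induction z using Int.induction_on with
  | zero =>
    refine ⟨0, ?_⟩
    rw [Int.cast_zero, ← QuaternionGroup.one_def, map_one, sgn_zero]
    simp
  | succ z ih =>
    obtain ⟨q, hq⟩ := ih
    refine ⟨Xq n * q + sgn n ((z : ℤ) : ZMod (2*n)) • (1 : QR n), ?_⟩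
    have hcast : (((z : ℤ) + 1 : ℤ) : ZMod (2*n)) = ((z : ℤ) : ZMod (2*n)) + 1 := by
      push_cast; ring
    have hmul : QuaternionGroup.a (((z : ℤ) : ZMod (2*n)) + 1)
        = QuaternionGroup.a 1 * QuaternionGroup.a ((z : ℤ) : ZMod (2*n)) := by
      rw [QuaternionGroup.a_mul_a]; congr 1; exact add_comm _ _
    have hsgn : sgn n (((z : ℤ) + 1 : ℤ) : ZMod (2*n)) = -sgn n ((z : ℤ) : ZMod (2*n)) := by
      rw [hcast, sgn_add, sgn_one]; ring
    rw [hsgn, hcast, hmul, map_mul, hq]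
    show Xq n * _ = _
    simp only [mul_add, add_mul, mul_smul_comm, smul_mul_assoc, smul_add, mul_one, one_mul,
      neg_smul, ← mul_assoc]
    abel
  | pred z ih =>
    obtain ⟨q, hq⟩ := ih
    set X' : QR n := of ℤ (QuaternionGroup n) (QuaternionGroup.a (-1)) with hX'
    refine ⟨X' * q + sgn n ((-z : ℤ) : ZMod (2*n)) • X', ?_⟩
    have hcast : (((-z : ℤ) - 1 : ℤ) : ZMod (2*n)) = -1 + ((-z : ℤ) : ZMod (2*n)) := by
      push_cast; ring
    have hmul : QuaternionGroup.a (-1 + ((-z : ℤ) : ZMod (2*n)))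
        = QuaternionGroup.a (-1) * QuaternionGroup.a ((-z : ℤ) : ZMod (2*n)) := by
      rw [QuaternionGroup.a_mul_a]
    have hsgn : sgn n (((-z : ℤ) - 1 : ℤ) : ZMod (2*n)) = -sgn n ((-z : ℤ) : ZMod (2*n)) := by
      rw [hcast, sgn_add]
      have : sgn n (-1 : ZMod (2*n)) = -1 := by rw [sgn_neg, sgn_one]
      rw [this]; ring
    have hX'X : X' * Xq n = 1 := by
      rw [hX', Xq, ← map_mul, QuaternionGroup.a_mul_a, neg_add_cancel, ← QuaternionGroup.one_def,
        map_one]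
    rw [hsgn, hcast, hmul, map_mul, hq, ← hX']
    simp only [mul_add, add_mul, mul_smul_comm, smul_mul_assoc, smul_add, mul_one, one_mul,
      neg_smul, ← mul_assoc, hX'X]
    abel

end Aux

section Part1

open AddSubgroup

lemma zsmul_mul (n : ℕ) (r : ℤ) (x : QR n) : r • x = (r : QR n) * x := by
  rw [← zsmul_eq_mul, ← Int.cast_smul_eq_zsmul ℤ, Int.cast_id]

lemma p1_smul (n : ℕ) (a b : ℤ) :
    (a : QR n) + (b : QR n) * Yq n = a • (1 : QR n) + b • Yq n := by
  rw [zsmul_mul n a, zsmul_mul n b, mul_one]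

lemma memA (n : ℕ) (a b : ℤ) (i : ZMod (2*n)) :
    of ℤ (QuaternionGroup n) (QuaternionGroup.a i) - sgn n i • (1 : QR n) ∈ Pideal n a b := by
  obtain ⟨q, hq⟩ := a_sub n i
  rw [hq, add_sub_cancel_left, ← smul_eq_mul]
  exact Submodule.smul_mem _ q (Ideal.subset_span (Set.mem_insert_of_mem _ rfl))

lemma memXA (n : ℕ) (a b : ℤ) (i : ZMod (2*n)) :
    of ℤ (QuaternionGroup n) (QuaternionGroup.xa i) - sgn n i • Yq n ∈ Pideal n a b := by
  obtain ⟨q, hq⟩ := a_sub n i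
  have h : of ℤ (QuaternionGroup n) (QuaternionGroup.xa i)
      = Yq n * of ℤ (QuaternionGroup n) (QuaternionGroup.a i) := by
    rw [Yq, ← map_mul, QuaternionGroup.xa_mul_a, zero_add]
  rw [h, hq, mul_add, mul_smul_comm, mul_one, add_sub_cancel_left, ← mul_assoc, ← smul_eq_mul]
  exact Submodule.smul_mem _ _ (Ideal.subset_span (Set.mem_insert_of_mem _ rfl))

lemma yy (n : ℕ) : Yq n * Yq n
    = of ℤ (QuaternionGroup n) (QuaternionGroup.a ((n : ZMod (2*n)))) := by
  rw [Yq, ← map_mul, QuaternionGroup.xa_mul_xa]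
  simp

lemma mem2 (n : ℕ) (a b : ℤ) :
    (sgn n ((n : ZMod (2*n))) * b) • (1 : QR n) + a • Yq n ∈ Pideal n a b := by
  obtain ⟨q, hq⟩ := a_sub n ((n : ZMod (2*n)))
  have key : (sgn n ((n : ZMod (2*n))) * b) • (1 : QR n) + a • Yq n
      = Yq n • ((a : QR n) + (b : QR n) * Yq n) - (b • q) • (Xq n + 1) := by
    rw [smul_eq_mul, smul_eq_mul, p1_smul, mul_add, mul_smul_comm, mul_smul_comm, mul_one,
      yy, hq, smul_mul_assoc]
    simp only [smul_add, smul_smul]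
    rw [mul_comm (sgn n ((n : ZMod (2*n)))) b]
    abel
  rw [key]
  exact sub_mem (Submodule.smul_mem _ _ (Ideal.subset_span (Set.mem_insert _ _)))
    (Submodule.smul_mem _ _ (Ideal.subset_span (Set.mem_insert_of_mem _ rfl)))

noncomputable def fsgn (n : ℕ) : QuaternionGroup n → ℤ × ℤ
  | QuaternionGroup.a i => (sgn n i, 0)
  | QuaternionGroup.xa i => (0, sgn n i)

@[simp] lemma fsgn_a (n : ℕ) (i : ZMod (2*n)) : fsgn n (QuaternionGroup.a i) = (sgn n i, 0) := rfl
@[simp] lemma fsgn_xa (n : ℕ) (i : ZMod (2*n)) : fsgn n (QuaternionGroup.xa i) = (0, sgn n i) := rfl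

noncomputable def phi0 (n : ℕ) : QR n →+ ℤ × ℤ :=
  (Finsupp.liftAddHom fun g => zmultiplesHom (ℤ × ℤ) (fsgn n g)).comp
    MonoidAlgebra.coeffAddEquiv.toAddMonoidHom

lemma phi0_of (n : ℕ) (g : QuaternionGroup n) : phi0 n (of ℤ (QuaternionGroup n) g) = fsgn n g := by
  rw [MonoidAlgebra.of_apply]
  show phi0 n (MonoidAlgebra.single g 1) = fsgn n g
  have h := Finsupp.liftAddHom_apply_single
    (fun g => zmultiplesHom (ℤ × ℤ) (fsgn n g)) g (1 : ℤ)
  have h2 : ((zmultiplesHom (ℤ × ℤ)) (fsgn n g)) (1 : ℤ) = fsgn n g := one_zsmul _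
  exact h.trans h2

lemma phi0_zsmul (n : ℕ) (c : ℤ) (x : QR n) : phi0 n (c • x) = c • phi0 n x :=
  (phi0 n).toIntLinearMap.map_smul c x

lemma phi0_one (n : ℕ) : phi0 n 1 = (1, 0) := by
  rw [show (1 : QR n) = of ℤ (QuaternionGroup n) 1 from (map_one _).symm,
    QuaternionGroup.one_def, phi0_of, fsgn_a, sgn_zero]

lemma phi0_Yq (n : ℕ) : phi0 n (Yq n) = (0, 1) := by
  rw [Yq, phi0_of, fsgn_xa, sgn_zero]

end Part1

set_option maxHeartbeats 2000000 in
open AddSubgroup in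
lemma part1 (n : ℕ) (a b : ℤ) :
    Nonempty (((ℤ × ℤ) ⧸ AddSubgroup.closure
        {((a, b) : ℤ × ℤ), ((if Odd n then (-1:ℤ) else 1) * b, a)})
      ≃+ (QR n ⧸ Pideal n a b)) := by
  set P := Pideal n a b with hP
  set L := AddSubgroup.closure
    {((a, b) : ℤ × ℤ), ((if Odd n then (-1:ℤ) else 1) * b, a)} with hL
  have hgenL1 : ((a, b) : ℤ × ℤ) ∈ L := by
    rw [hL]; exact AddSubgroup.subset_closure (Set.mem_insert _ _)
  have hgenL2 : (((if Odd n then (-1:ℤ) else 1) * b, a) : ℤ × ℤ) ∈ L := by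
    rw [hL]; exact AddSubgroup.subset_closure (Set.mem_insert_of_mem _ rfl)
  have hmkQ_zsmul : ∀ (c : ℤ) (x : QR n), P.mkQ (c • x) = c • P.mkQ x := fun c x =>
    Submodule.Quotient.mk_smul P c x
  set ψ0 : ℤ × ℤ →+ QR n ⧸ P :=
    ((zmultiplesHom _ (P.mkQ 1)).comp (AddMonoidHom.fst ℤ ℤ)) +
    ((zmultiplesHom _ (P.mkQ (Yq n))).comp (AddMonoidHom.snd ℤ ℤ)) with hψ0
  have hψ0_apply : ∀ c e : ℤ, ψ0 (c, e) = P.mkQ (c • (1 : QR n) + e • Yq n) := by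
    intro c e
    rw [hψ0]
    simp only [AddMonoidHom.add_apply, AddMonoidHom.comp_apply, AddMonoidHom.coe_fst,
      AddMonoidHom.coe_snd, zmultiplesHom_apply, map_add, hmkQ_zsmul]
  have hεn : sgn n ((n : ZMod (2*n))) = (if Odd n then (-1:ℤ) else 1) := sgn_natCast_n n
  have hLker : L ≤ ψ0.ker := by
    rw [hL]
    intro x hx
    refine (closure_le (AddMonoidHom.ker ψ0)).mpr ?_ hx
    rintro z (rfl | rfl) <;> rw [SetLike.mem_coe, AddMonoidHom.mem_ker, hψ0_apply]
    · rw [← p1_smul]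
      exact (Submodule.Quotient.mk_eq_zero P).mpr (Ideal.subset_span (Set.mem_insert _ _))
    · rw [← hεn]
      exact (Submodule.Quotient.mk_eq_zero P).mpr (mem2 n a b)
  -- the inverse-checking homomorphism
  have hPL : ∀ z ∈ P, phi0 n z ∈ L := by
    have c1 : ∀ r : QR n, phi0 n (r * ((a : QR n) + (b : QR n) * Yq n)) ∈ L := by
      intro r
      induction r using MonoidAlgebra.induction_on with
      | of g =>
        rw [p1_smul, mul_add, mul_smul_comm, mul_smul_comm, mul_one, map_add, phi0_zsmul,
          phi0_zsmul]
        cases g with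
        | a i =>
          have hgy : of ℤ (QuaternionGroup n) (QuaternionGroup.a i) * Yq n
              = of ℤ (QuaternionGroup n) (QuaternionGroup.xa (-i)) := by
            rw [Yq, ← map_mul, QuaternionGroup.a_mul_xa, zero_sub]
          rw [hgy, phi0_of, phi0_of, fsgn_a, fsgn_xa]
          have h : a • ((sgn n i, 0) : ℤ × ℤ) + b • ((0 : ℤ), sgn n (-i))
              = sgn n i • ((a, b) : ℤ × ℤ) := by
            rw [sgn_neg]
            refine Prod.ext ?_ ?_ <;> simp [smul_eq_mul] <;> ring
          rw [h]
          exact zsmul_mem hgenL1 _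
        | xa i =>
          have hgy : of ℤ (QuaternionGroup n) (QuaternionGroup.xa i) * Yq n
              = of ℤ (QuaternionGroup n)
                  (QuaternionGroup.a ((n : ZMod (2*n)) + 0 - i)) := by
            rw [Yq, ← map_mul, QuaternionGroup.xa_mul_xa]
          have hs : sgn n ((n : ZMod (2*n)) + 0 - i)
              = (if Odd n then (-1:ℤ) else 1) * sgn n i := by
            rw [add_zero, sub_eq_add_neg, sgn_add, sgn_neg, hεn]
          rw [hgy, phi0_of, phi0_of, fsgn_a, fsgn_xa, hs]
          have h : a • ((0 : ℤ), sgn n i)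
              + b • (((if Odd n then (-1:ℤ) else 1) * sgn n i, 0) : ℤ × ℤ)
              = sgn n i • (((if Odd n then (-1:ℤ) else 1) * b, a) : ℤ × ℤ) := by
            refine Prod.ext ?_ ?_ <;> simp [smul_eq_mul] <;> ring
          rw [h]
          exact zsmul_mem hgenL2 _
      | add u w hu hw => rw [add_mul, map_add]; exact add_mem hu hw
      | smul c w hw => rw [smul_mul_assoc, phi0_zsmul]; exact zsmul_mem hw c
    have c2 : ∀ r : QR n, phi0 n (r * (Xq n + 1)) ∈ L := by
      intro r
      induction r using MonoidAlgebra.induction_on with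
      | of g =>
        rw [mul_add, mul_one, map_add]
        cases g with
        | a i =>
          have hgx : of ℤ (QuaternionGroup n) (QuaternionGroup.a i) * Xq n
              = of ℤ (QuaternionGroup n) (QuaternionGroup.a (i + 1)) := by
            rw [Xq, ← map_mul, QuaternionGroup.a_mul_a]
          rw [hgx, phi0_of, phi0_of, fsgn_a, fsgn_a, sgn_add, sgn_one]
          have h : ((sgn n i * -1, 0) : ℤ × ℤ) + (sgn n i, 0) = 0 := by
            refine Prod.ext ?_ ?_ <;> simp
          rw [h]
          exact zero_mem _
        | xa i =>
          have hgx : of ℤ (QuaternionGroup n) (QuaternionGroup.xa i) * Xq n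
              = of ℤ (QuaternionGroup n) (QuaternionGroup.xa (i + 1)) := by
            rw [Xq, ← map_mul, QuaternionGroup.xa_mul_a]
          rw [hgx, phi0_of, phi0_of, fsgn_xa, fsgn_xa, sgn_add, sgn_one]
          have h : (((0 : ℤ), sgn n i * -1) : ℤ × ℤ) + (0, sgn n i) = 0 := by
            refine Prod.ext ?_ ?_ <;> simp
          rw [h]
          exact zero_mem _
      | add u w hu hw => rw [add_mul, map_add]; exact add_mem hu hw
      | smul c w hw => rw [smul_mul_assoc, phi0_zsmul]; exact zsmul_mem hw c
    intro z hz
    rw [hP, Pideal] at hz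
    obtain ⟨r, s, hrs⟩ := Submodule.mem_span_pair.mp hz
    rw [← hrs, map_add, smul_eq_mul, smul_eq_mul]
    exact add_mem (c1 r) (c2 s)
  have hsurj : Function.Surjective (QuotientAddGroup.lift L ψ0 hLker) := by
    have key : ∀ z : QR n, ∃ p : ℤ × ℤ,
        QuotientAddGroup.lift L ψ0 hLker (QuotientAddGroup.mk p) = P.mkQ z := by
      intro z
      induction z using MonoidAlgebra.induction_on with
      | of g =>
        cases g with
        | a i =>
          refine ⟨(sgn n i, 0), ?_⟩
          rw [QuotientAddGroup.lift_mk, hψ0_apply]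
          refine (Submodule.Quotient.eq P).mpr ?_
          have h := neg_mem (memA n a b i)
          rw [neg_sub] at h
          simpa using h
        | xa i =>
          refine ⟨(0, sgn n i), ?_⟩
          rw [QuotientAddGroup.lift_mk, hψ0_apply]
          refine (Submodule.Quotient.eq P).mpr ?_
          have h := neg_mem (memXA n a b i)
          rw [neg_sub] at h
          simpa using h
      | add u w hu hw =>
        obtain ⟨p, hp⟩ := hu
        obtain ⟨p', hp'⟩ := hw
        refine ⟨p + p', ?_⟩
        have hq : ((p + p' : ℤ × ℤ) : (ℤ × ℤ) ⧸ L) = (p : (ℤ × ℤ) ⧸ L) + (p' : (ℤ × ℤ) ⧸ L) :=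
          map_add (QuotientAddGroup.mk' L) p p'
        rw [hq, map_add, hp, hp', map_add]
      | smul c w hw =>
        obtain ⟨p, hp⟩ := hw
        refine ⟨c • p, ?_⟩
        have hq : ((c • p : ℤ × ℤ) : (ℤ × ℤ) ⧸ L) = c • (p : (ℤ × ℤ) ⧸ L) :=
          map_zsmul (QuotientAddGroup.mk' L) c p
        rw [hq, map_zsmul, hp, ← hmkQ_zsmul]
    intro w
    obtain ⟨z, rfl⟩ := P.mkQ_surjective w
    obtain ⟨p, hp⟩ := key z
    exact ⟨QuotientAddGroup.mk p, hp⟩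
  have hinj : Function.Injective (QuotientAddGroup.lift L ψ0 hLker) := by
    rw [injective_iff_map_eq_zero]
    intro x hx
    obtain ⟨⟨c, e⟩, rfl⟩ := QuotientAddGroup.mk_surjective x
    rw [QuotientAddGroup.lift_mk, hψ0_apply] at hx
    have hmem : c • (1 : QR n) + e • Yq n ∈ P := (Submodule.Quotient.mk_eq_zero P).mp hx
    have h2 := hPL _ hmem
    rw [map_add, phi0_zsmul, phi0_zsmul, phi0_one, phi0_Yq] at h2
    have h3 : c • ((1 : ℤ), (0 : ℤ)) + e • ((0 : ℤ), (1 : ℤ)) = ((c, e) : ℤ × ℤ) := by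
      refine Prod.ext ?_ ?_ <;> simp
    rw [h3] at h2
    exact (QuotientAddGroup.eq_zero_iff _).mpr h2
  exact ⟨AddEquiv.ofBijective _ ⟨hinj, hsurj⟩⟩

theorem stmt1 (n : ℕ) (a b : ℤ)
    (k : ℤ) (hk : k = if Odd n then a ^ 2 + b ^ 2 else a ^ 2 - b ^ 2)
    (d : ℕ) (hd : d = Int.gcd a b)
    (t : ℕ) (ht : t = (k / (d : ℤ)).natAbs) :
    Nonempty ((QR n ⧸ Pideal n a b) ≃+ (ZMod t × ZMod d)) := by
  have hk' : k = a ^ 2 - (if Odd n then (-1:ℤ) else 1) * b ^ 2 := by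
    rcases em (Odd n) with h | h
    · simp only [hk, if_pos h]; ring
    · simp only [hk, if_neg h]; ring
  obtain ⟨e1⟩ := part1 n a b
  obtain ⟨e2⟩ := part2 a b (if Odd n then (-1:ℤ) else 1) d t hd (by rw [ht, hk'])
  exact ⟨e1.symm.trans e2⟩
end

section
/- Let n be odd and gcd(a²+b², 2n) = 1. Then the ideal P = ⟨a+by, x+1⟩ of ZQ_{4n} contains an element of augmentation 1, and consequently N·P = ⟨N⟩, where N is the sum of all group elements of Q_{4n}. -/
open MonoidAlgebra

/-- the norm element: sum of all group elements -/
noncomputable def Nelt (n : ℕ) [NeZero n] : QR n :=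
  ∑ g : QuaternionGroup n, of ℤ (QuaternionGroup n) g

/-- the augmentation map -/
noncomputable def aug (n : ℕ) : QR n →+* ℤ :=
  ((MonoidAlgebra.lift ℤ ℤ (QuaternionGroup n)) 1).toRingHom

lemma aug_of (n : ℕ) (g : QuaternionGroup n) : aug n (of ℤ (QuaternionGroup n) g) = 1 := by
  simp [aug]

lemma of_mul_N (n : ℕ) [NeZero n] (g : QuaternionGroup n) :
    of ℤ (QuaternionGroup n) g * Nelt n = Nelt n := by
  unfold Nelt
  rw [Finset.mul_sum]
  exact Fintype.sum_equiv (Equiv.mulLeft g) _ _ (fun x => by simp [← map_mul])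

lemma mul_N (n : ℕ) [NeZero n] (r : QR n) :
    r * Nelt n = aug n r • Nelt n := by
  induction r using MonoidAlgebra.induction_on with
  | of g => rw [of_mul_N, aug_of, one_smul]
  | add f g hf hg => rw [add_mul, hf, hg, map_add, add_smul]
  | smul c f hf => rw [smul_mul_assoc, hf, map_zsmul, smul_assoc]

lemma N_mul_of (n : ℕ) [NeZero n] (g : QuaternionGroup n) :
    Nelt n * of ℤ (QuaternionGroup n) g = Nelt n := by
  unfold Nelt
  rw [Finset.sum_mul]
  exact Fintype.sum_equiv (Equiv.mulRight g) _ _ (fun x => by simp [← map_mul])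

lemma N_mul (n : ℕ) [NeZero n] (r : QR n) :
    Nelt n * r = aug n r • Nelt n := by
  induction r using MonoidAlgebra.induction_on with
  | of g => rw [N_mul_of, aug_of, one_smul]
  | add f g hf hg => rw [mul_add, hf, hg, map_add, add_smul]
  | smul c f hf => rw [mul_smul_comm, hf, map_zsmul, smul_assoc]

theorem stmt5 (n : ℕ) [NeZero n] (a b : ℤ) (hn : Odd n)
    (hco : Int.gcd (a ^ 2 + b ^ 2) (2 * n) = 1) :
    (∃ p ∈ Pideal n a b, aug n p = 1) ∧
    (∀ z : QR n, (∃ p ∈ Pideal n a b, z = Nelt n * p) ↔ z ∈ Ideal.span {Nelt n}) := by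
  -- a + b is odd
  have hcop : IsCoprime (a ^ 2 + b ^ 2) (2 * (n : ℤ)) := by
    rw [Int.isCoprime_iff_gcd_eq_one]; exact_mod_cast hco
  have hodd2 : Odd (a ^ 2 + b ^ 2) := by
    rw [← Int.not_even_iff_odd]
    intro ⟨k, hk⟩
    have h2 : IsUnit (2 : ℤ) := hcop.isUnit_of_dvd' ⟨k, by linarith⟩ ⟨n, rfl⟩
    rw [Int.isUnit_iff] at h2; omega
  have hab : Odd (a + b) := by
    rcases Int.even_or_odd a with ha | ha <;> rcases Int.even_or_odd b with hb | hb
    · exact absurd hodd2 (by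
        rw [← Int.not_even_iff_odd, not_not]
        exact (Int.even_pow.mpr ⟨ha, two_ne_zero⟩).add (Int.even_pow.mpr ⟨hb, two_ne_zero⟩))
    · exact ha.add_odd hb
    · exact ha.add_even hb
    · exact absurd hodd2 (by rw [← Int.not_even_iff_odd, not_not]; exact ha.pow.add_odd hb.pow)
  obtain ⟨k, hk⟩ := hab
  -- the element of augmentation 1
  set g1 : QR n := (a : QR n) + (b : QR n) * Yq n with hg1
  set g2 : QR n := Xq n + 1 with hg2
  set p₁ : QR n := g1 + ((-k : ℤ) : QR n) * g2 with hp₁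
  have hg1mem : g1 ∈ Pideal n a b := Ideal.subset_span (by left; rfl)
  have hg2mem : g2 ∈ Pideal n a b := Ideal.subset_span (by right; rfl)
  have hp₁mem : p₁ ∈ Pideal n a b :=
    Ideal.add_mem _ hg1mem (Ideal.mul_mem_left _ _ hg2mem)
  have haugY : aug n (Yq n) = 1 := aug_of n _
  have haugX : aug n (Xq n) = 1 := aug_of n _
  have hp₁aug : aug n p₁ = 1 := by
    simp only [hp₁, hg1, hg2, map_add, map_mul, map_intCast, map_one, haugX, haugY]
    push_cast
    linarith
  refine ⟨⟨p₁, hp₁mem, hp₁aug⟩, fun z => ⟨?_, ?_⟩⟩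
  · rintro ⟨p, hp, rfl⟩
    rw [N_mul, zsmul_eq_mul]
    exact Ideal.mem_span_singleton'.mpr ⟨_, rfl⟩
  · intro hz
    obtain ⟨r, hr⟩ := Ideal.mem_span_singleton'.mp hz
    refine ⟨((aug n r : ℤ) : QR n) * p₁, Ideal.mul_mem_left _ _ hp₁mem, ?_⟩
    calc z = r * Nelt n := hr.symm
    _ = ((aug n r : ℤ) : QR n) * Nelt n := by rw [mul_N, zsmul_eq_mul]
    _ = ((aug n r : ℤ) : QR n) * (aug n p₁ • Nelt n) := by rw [hp₁aug, one_smul]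
    _ = ((aug n r : ℤ) : QR n) * (Nelt n * p₁) := by rw [N_mul]
    _ = Nelt n * (((aug n r : ℤ) : QR n) * p₁) := by
        rw [← mul_assoc, ← mul_assoc, (Int.cast_commute (aug n r) (Nelt n)).eq]
end

section
/- The quotient ring ZQ_{4n}/⟨x+1⟩ is isomorphic to the Gaussian integers Z[i], via x ↦ -1 and y ↦ i. -/
open MonoidAlgebra

namespace Stmt6Aux

open QuaternionGroup Zsqrtd

/-- sign function on `ZMod 2` with values in `ℤ[i]`. -/
def u : ZMod 2 → GaussianInt := fun t => if t = 0 then 1 else -1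

lemma u_add : ∀ s t : ZMod 2, u (s + t) = u s * u t := by decide
lemma u_neg : ∀ s : ZMod 2, u (-s) = u s := by decide
lemma u_zero : u 0 = 1 := rfl
lemma u_one : u 1 = -1 := rfl

lemma u_natCast (k : ℕ) : u (k : ZMod 2) = (-1) ^ k := by
  induction k with
  | zero => simpa using u_zero
  | succ k ih =>
      push_cast
      rw [u_add, ih, u_one, pow_succ]

lemma sqrtd_sq : (sqrtd : GaussianInt) * sqrtd = -1 := by
  rw [Zsqrtd.dmuld]; push_cast; ring

/-- reduction mod 2 -/
def c (n : ℕ) : ZMod (2 * n) →+* ZMod 2 := ZMod.castHom (dvd_mul_right 2 n) (ZMod 2)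

/-- The monoid hom `Q_{4n} → ℤ[i]`, `a i ↦ (-1)^i`, `xa i ↦ i·(-1)^i`. -/
def φ (n : ℕ) (hn : Odd n) : QuaternionGroup n →* GaussianInt where
  toFun := fun g => match g with
    | .a i => u (c n i)
    | .xa i => sqrtd * u (c n i)
  map_one' := by
    show u (c n 0) = 1
    rw [map_zero, u_zero]
  map_mul' := by
    have hcn : ((n : ZMod 2)) = 1 := by
      obtain ⟨k, hk⟩ := hn
      subst hk; push_cast
      simp [show ((2:ZMod 2)) = 0 from rfl]
    rintro (i | i) (j | j) <;>
      simp only [a_mul_a, a_mul_xa, xa_mul_a, xa_mul_xa]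
    · show u (c n (i + j)) = u (c n i) * u (c n j)
      rw [map_add, u_add]
    · show sqrtd * u (c n (j - i)) = u (c n i) * (sqrtd * u (c n j))
      rw [map_sub, sub_eq_add_neg, u_add, u_neg]
      ring
    · show sqrtd * u (c n (i + j)) = sqrtd * u (c n i) * u (c n j)
      rw [map_add, u_add]
      ring
    · show u (c n ((n : ZMod (2*n)) + j - i)) = sqrtd * u (c n i) * (sqrtd * u (c n j))
      rw [map_sub, map_add, map_natCast, hcn]
      rw [sub_eq_add_neg, u_add, u_add, u_neg, u_one]
      rw [show sqrtd * u (c n i) * (sqrtd * u (c n j)) = sqrtd * sqrtd * (u (c n i) * u (c n j)) by ring,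
        sqrtd_sq]
      ring

end Stmt6Aux

/-- `ℤQ_{4n}/⟨x+1⟩ ≅ ℤ[i]` via `x ↦ -1`, `y ↦ i`: there is a surjective ring homomorphism
`ℤQ_{4n} → ℤ[i]` sending `x` to `-1` and `y` to `i`, whose kernel is the ideal `⟨x+1⟩`. -/
theorem stmt6 (n : ℕ) (hn : Odd n) :
    ∃ f : QR n →+* GaussianInt,
      f (Xq n) = -1 ∧ f (Yq n) = Zsqrtd.sqrtd ∧
      Function.Surjective f ∧ RingHom.ker f = Ideal.span {Xq n + 1} := by
  classical
  haveI : NeZero (2 * n) := ⟨Nat.mul_ne_zero two_ne_zero hn.pos.ne'⟩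
  open Stmt6Aux QuaternionGroup Zsqrtd in
  · set φn := Stmt6Aux.φ n hn with hφn
    set f : QR n →+* GaussianInt :=
      ((MonoidAlgebra.lift ℤ GaussianInt (QuaternionGroup n)) φn).toRingHom with hf
    have hfof : ∀ g : QuaternionGroup n, f (of ℤ (QuaternionGroup n) g) = φn g := fun g => by
      simp [hf, MonoidAlgebra.lift_of]
    have hc1 : Stmt6Aux.c n (1 : ZMod (2*n)) = 1 := map_one _
    have hX : f (Xq n) = -1 := by
      rw [Xq, hfof]
      show u (c n 1) = -1
      rw [hc1, u_one]
    have hY : f (Yq n) = sqrtd := by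
      rw [Yq, hfof]
      show sqrtd * u (c n 0) = sqrtd
      rw [map_zero, u_zero, mul_one]
    refine ⟨f, hX, hY, ?_, ?_⟩
    · -- surjectivity
      intro z
      refine ⟨(z.re : QR n) + (z.im : QR n) * Yq n, ?_⟩
      rw [map_add, map_mul, map_intCast, map_intCast, hY]
      ext <;> simp
    · -- kernel
      set J : Ideal (QR n) := Ideal.span {Xq n + 1} with hJ
      have hXmem : Xq n + 1 ∈ J := Ideal.subset_span rfl
      have hpow : ∀ k : ℕ, Xq n ^ k - (((-1 : ℤ) ^ k : ℤ) : QR n) ∈ J := by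
        intro k
        induction k with
        | zero => simp only [pow_zero, Int.cast_one, sub_self]; exact J.zero_mem
        | succ k ih =>
            have hck : (((-1 : ℤ) ^ (k+1) : ℤ) : QR n) = -(((-1 : ℤ) ^ k : ℤ) : QR n) := by
              rw [show ((-1 : ℤ) ^ (k+1)) = -((-1 : ℤ) ^ k) by ring, Int.cast_neg]
            have hcomm : Xq n * (((-1 : ℤ) ^ k : ℤ) : QR n)
                = (((-1 : ℤ) ^ k : ℤ) : QR n) * Xq n :=
              ((Int.cast_commute ((-1 : ℤ) ^ k) (Xq n)).eq).symm
            have hstep : Xq n ^ (k+1) - (((-1 : ℤ) ^ (k+1) : ℤ) : QR n)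
                = Xq n * (Xq n ^ k - (((-1 : ℤ) ^ k : ℤ) : QR n))
                  + (((-1 : ℤ) ^ k : ℤ) : QR n) * (Xq n + 1) := by
              rw [hck, mul_sub, mul_add, mul_one, hcomm, pow_succ']
              abel
            rw [hstep]
            exact J.add_mem (J.mul_mem_left _ ih) (J.mul_mem_left _ hXmem)
      have hred : ∀ x : QR n, ∃ p q : ℤ,
          x - (((p : ℤ) : QR n) + ((q : ℤ) : QR n) * Yq n) ∈ J := by
        intro x
        induction x using MonoidAlgebra.induction_on with
        | of σ =>
            rcases σ with i | i
            · refine ⟨(-1) ^ i.val, 0, ?_⟩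
              have hiv : (i : ZMod (2*n)) = ((i.val : ℕ) : ZMod (2*n)) := by
                rw [ZMod.natCast_val, ZMod.cast_id]
              have hofa : of ℤ (QuaternionGroup n) (a i) = Xq n ^ i.val := by
                rw [Xq, ← map_pow, a_one_pow, ← hiv]
              have : of ℤ (QuaternionGroup n) (a i)
                  - ((((-1 : ℤ) ^ i.val : ℤ) : QR n) + ((0 : ℤ) : QR n) * Yq n)
                  = Xq n ^ i.val - (((-1 : ℤ) ^ i.val : ℤ) : QR n) := by
                rw [hofa, Int.cast_zero, zero_mul, add_zero]
              rw [this]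
              exact hpow i.val
            · refine ⟨0, (-1) ^ i.val, ?_⟩
              have hiv : (i : ZMod (2*n)) = ((i.val : ℕ) : ZMod (2*n)) := by
                rw [ZMod.natCast_val, ZMod.cast_id]
              have hofa : of ℤ (QuaternionGroup n) (xa i) = Yq n * Xq n ^ i.val := by
                rw [Xq, Yq, ← map_pow, ← map_mul, a_one_pow, ← hiv, xa_mul_a, zero_add]
              have : of ℤ (QuaternionGroup n) (xa i)
                  - ((((0 : ℤ)) : QR n) + ((((-1 : ℤ) ^ i.val : ℤ)) : QR n) * Yq n)
                  = Yq n * (Xq n ^ i.val - (((-1 : ℤ) ^ i.val : ℤ) : QR n)) := by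
                rw [hofa, Int.cast_zero, zero_add,
                  (Int.cast_commute ((-1 : ℤ) ^ i.val) (Yq n)).eq, mul_sub]
              rw [this]
              exact J.mul_mem_left _ (hpow i.val)
        | add x y hx hy =>
            obtain ⟨p₁, q₁, h₁⟩ := hx
            obtain ⟨p₂, q₂, h₂⟩ := hy
            refine ⟨p₁ + p₂, q₁ + q₂, ?_⟩
            have : x + y - (((p₁ + p₂ : ℤ) : QR n) + ((q₁ + q₂ : ℤ) : QR n) * Yq n)
                = (x - (((p₁ : ℤ) : QR n) + ((q₁ : ℤ) : QR n) * Yq n))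
                  + (y - (((p₂ : ℤ) : QR n) + ((q₂ : ℤ) : QR n) * Yq n)) := by
              push_cast; noncomm_ring
            rw [this]
            exact J.add_mem h₁ h₂
        | smul r x hx =>
            obtain ⟨p, q, h⟩ := hx
            refine ⟨r * p, r * q, ?_⟩
            have : r • x - (((r * p : ℤ) : QR n) + ((r * q : ℤ) : QR n) * Yq n)
                = ((r : ℤ) : QR n) * (x - (((p : ℤ) : QR n) + ((q : ℤ) : QR n) * Yq n)) := by
              rw [zsmul_eq_mul]; push_cast; noncomm_ring
            rw [this]
            exact J.mul_mem_left _ h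
      have hJker : J ≤ RingHom.ker f := by
        rw [hJ, Ideal.span_le, Set.singleton_subset_iff]
        simp only [SetLike.mem_coe, RingHom.mem_ker, map_add, hX, map_one]
        ring
      apply _root_.le_antisymm
      · intro x hx
        rw [RingHom.mem_ker] at hx
        obtain ⟨p, q, hpq⟩ := hred x
        have h0 : f (((p : ℤ) : QR n) + ((q : ℤ) : QR n) * Yq n) = 0 := by
          have := hJker hpq
          rw [RingHom.mem_ker, map_sub, hx, zero_sub, neg_eq_zero] at this
          exact this
        rw [map_add, map_mul, map_intCast, map_intCast, hY] at h0
        have hp : p = 0 ∧ q = 0 := by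
          have h0' := congrArg Zsqrtd.re h0
          have h0'' := congrArg Zsqrtd.im h0
          simp at h0' h0''
          exact ⟨h0', h0''⟩
        have : (((p : ℤ) : QR n) + ((q : ℤ) : QR n) * Yq n) = 0 := by
          rw [hp.1, hp.2]; push_cast; noncomm_ring
        rw [this, sub_zero] at hpq
        exact hpq
      · exact hJker
end

section
/- Let n be odd, gcd(a²+b², 2n)=1, and P = ⟨a+by, x+1⟩ ⊆ ZQ_{4n}. Then P/⟨x^n+1⟩P is isomorphic as a module over ZQ_{4n}/⟨x^n+1⟩ to the pullback module {(e,f) ∈ ZQ_{4n}/⟨ψ_{2n}⟩ ⊕ ZQ_{4n}/⟨x+1⟩ : ē = (a+by)·f̄ in Z_n[y]/⟨y²+1⟩}. -/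
open MonoidAlgebra Polynomial

/-- `ψ_{2n} = 1 - x + x² - ⋯ + x^{n-1}` -/
noncomputable def psi (n : ℕ) : QR n := ∑ k ∈ Finset.range n, (-1 : QR n) ^ k * Xq n ^ k

/-- `⟨xⁿ+1⟩P`, as a submodule of `P` -/
noncomputable def xnP (n : ℕ) (a b : ℤ) : Submodule (QR n) (Pideal n a b) :=
  Submodule.comap (Pideal n a b).subtype
    (Submodule.span (QR n) ((fun w => (Xq n ^ n + 1) * w) '' (Pideal n a b : Set (QR n))))

/-- `Z_n[y]/⟨y²+1⟩` -/
abbrev Sn (n : ℕ) : Type := Polynomial (ZMod n) ⧸ Ideal.span {(X : Polynomial (ZMod n)) ^ 2 + 1}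

namespace Aux
variable {n : ℕ}

noncomputable def og (σ : QuaternionGroup n) : QR n := of ℤ (QuaternionGroup n) σ

lemma og_mul (σ τ : QuaternionGroup n) : og σ * og τ = og (σ * τ) := (map_mul (of ℤ (QuaternionGroup n)) σ τ).symm

lemma og_one : og (1 : QuaternionGroup n) = 1 := map_one (of ℤ (QuaternionGroup n))

lemma one_def : (1 : QuaternionGroup n) = QuaternionGroup.a 0 := rfl

lemma xq_pow (k : ℕ) : Xq n ^ k = og (QuaternionGroup.a (k : ZMod (2*n))) := by
  induction k with
  | zero => rw [pow_zero, Nat.cast_zero, ← one_def, og_one]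
  | succ k ih =>
      rw [pow_succ, ih, Xq, ← og, og_mul, QuaternionGroup.a_mul_a]
      push_cast
      ring_nf

lemma yq_sq : Yq n * Yq n = Xq n ^ n := by
  rw [Yq, ← og, og_mul, QuaternionGroup.xa_mul_xa, xq_pow]
  norm_num

end Aux

namespace Aux

lemma nn_zero : ((n : ZMod (2*n)) + n) = 0 := by
  have : ((n : ZMod (2*n)) + n) = ((2*n : ℕ) : ZMod (2*n)) := by push_cast; ring
  simp [this]

lemma neg_n : (-(n : ZMod (2*n))) = (n : ZMod (2*n)) := by
  rw [neg_eq_iff_add_eq_zero, nn_zero]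

/-- `x^n` is central -/
lemma t_central (r : QR n) : Xq n ^ n * r = r * Xq n ^ n := by
  rw [xq_pow]
  induction r using MonoidAlgebra.induction_on with
  | of σ =>
      show og _ * og σ = og σ * og _
      rw [og_mul, og_mul]
      rcases σ with j | j
      · rw [QuaternionGroup.a_mul_a, QuaternionGroup.a_mul_a, add_comm]
      · rw [QuaternionGroup.a_mul_xa, QuaternionGroup.xa_mul_a, sub_eq_add_neg, neg_n]
  | add f g hf hg => rw [mul_add, add_mul, hf, hg]
  | smul r f hf => rw [mul_smul_comm, smul_mul_assoc, hf]

/-- the left ideal generated by x+1 -/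
noncomputable def Ip (n : ℕ) : Ideal (QR n) := Ideal.span {Xq n + 1}

lemma p_mem : Xq n + 1 ∈ Ip n := Ideal.subset_span rfl

lemma p_mul_mem (c : QR n) : (Xq n + 1) * c ∈ Ip n := by
  induction c using MonoidAlgebra.induction_on with
  | of σ =>
      rcases σ with j | j
      · have : (Xq n + 1) * og (QuaternionGroup.a j) = og (QuaternionGroup.a j) * (Xq n + 1) := by
          rw [add_mul, mul_add, mul_one, one_mul, Xq, ← og, og_mul, og_mul,
            QuaternionGroup.a_mul_a, QuaternionGroup.a_mul_a, add_comm j 1]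
        rw [show of ℤ (QuaternionGroup n) (QuaternionGroup.a j) = og (QuaternionGroup.a j) from rfl, this]
        exact Ideal.mul_mem_left _ _ p_mem
      · have : (Xq n + 1) * og (QuaternionGroup.xa j) = og (QuaternionGroup.xa (j-1)) * (Xq n + 1) := by
          rw [add_mul, mul_add, mul_one, one_mul, Xq, ← og, og_mul, og_mul,
            QuaternionGroup.a_mul_xa, QuaternionGroup.xa_mul_a, sub_add_cancel, add_comm]
        rw [show of ℤ (QuaternionGroup n) (QuaternionGroup.xa j) = og (QuaternionGroup.xa j) from rfl, this]
        exact Ideal.mul_mem_left _ _ p_mem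
  | add f g hf hg => rw [mul_add]; exact add_mem hf hg
  | smul r f hf => rw [mul_smul_comm]; exact Submodule.smul_of_tower_mem _ r hf

lemma Ip_mul_mem {r : QR n} (hr : r ∈ Ip n) (c : QR n) : r * c ∈ Ip n := by
  obtain ⟨d, rfl⟩ := Ideal.mem_span_singleton'.mp hr
  rw [mul_assoc]
  exact Ideal.mul_mem_left _ _ (p_mul_mem c)

lemma x_pow_sub_mem (k : ℕ) : Xq n ^ k - (-1 : QR n) ^ k ∈ Ip n := by
  induction k with
  | zero => simp
  | succ k ih =>
      have : Xq n ^ (k+1) - (-1:QR n)^(k+1)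
          = Xq n * (Xq n ^ k - (-1:QR n)^k) + (-1:QR n)^k * (Xq n + 1) := by
        have hc : Commute ((-1:QR n)^k) (Xq n) := ((Commute.one_left (Xq n)).neg_left).pow_left k
        rw [mul_sub, mul_add, mul_one, hc.eq, pow_succ', pow_succ, mul_neg_one]
        abel
      rw [this]
      exact add_mem (Ideal.mul_mem_left _ _ ih) (Ideal.mul_mem_left _ _ p_mem)

end Aux

namespace Aux

lemma psi_eq : psi n = ∑ k ∈ Finset.range n, (-(Xq n))^k := by
  unfold psi
  exact Finset.sum_congr rfl fun k _ => (neg_pow (Xq n) k).symm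

lemma neg_pow_sub (k : ℕ) : ∃ d : QR n, Commute (Xq n) d ∧ (-(Xq n))^k - 1 = (Xq n + 1) * d := by
  induction k with
  | zero => exact ⟨0, Commute.zero_right _, by simp⟩
  | succ k ih =>
      obtain ⟨d, hc, hd⟩ := ih
      refine ⟨-(Xq n) * d - 1, ?_, ?_⟩
      · exact ((Commute.refl (Xq n)).neg_right.mul_right hc).sub_right (Commute.one_right _)
      · have hx : Commute (-(Xq n)) (Xq n + 1) :=
          (((Commute.refl (Xq n)).add_right (Commute.one_right _))).neg_left
        calc (-(Xq n))^(k+1) - 1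
            = -(Xq n) * ((-(Xq n))^k - 1) + (-(Xq n) - 1) := by rw [pow_succ']; noncomm_ring
          _ = -(Xq n) * ((Xq n + 1) * d) - (Xq n + 1) := by rw [hd]; noncomm_ring
          _ = (Xq n + 1) * (-(Xq n) * d - 1) := by rw [← mul_assoc, hx.eq, mul_assoc]; noncomm_ring

lemma geom_plus (N : ℕ) : ∃ c : QR n, Commute (Xq n) c ∧
    (∑ k ∈ Finset.range N, (-(Xq n))^k) + (Xq n + 1) * c = (N : QR n) := by
  induction N with
  | zero => exact ⟨0, Commute.zero_right _, by simp⟩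
  | succ N ih =>
      obtain ⟨c, hc, hcd⟩ := ih
      obtain ⟨d, hd, hdd⟩ := neg_pow_sub (n := n) N
      refine ⟨c - d, (hc.sub_right hd), ?_⟩
      rw [Finset.sum_range_succ, mul_sub]
      push_cast
      rw [← hcd]
      have : (-(Xq n))^N = (Xq n + 1) * d + 1 := by rw [← hdd]; abel
      rw [this]
      abel

lemma psi_plus : ∃ c : QR n, Commute (Xq n) c ∧ psi n + (Xq n + 1) * c = (n : QR n) := by
  rw [psi_eq]; exact geom_plus n

end Aux

namespace Aux

lemma commute_x_psi : Commute (Xq n) (psi n) := by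
  rw [psi_eq]
  exact Commute.sum_right _ _ _ fun k _ => ((Commute.refl (Xq n)).neg_right.pow_right k)

lemma psi_mul_p (hn : Odd n) : psi n * (Xq n + 1) = Xq n ^ n + 1 := by
  have h := geom_sum_mul (-(Xq n)) n
  rw [← psi_eq] at h
  have h2 : -(Xq n) - 1 = -(Xq n + 1) := by abel
  have h3 : -(Xq n ^ n) - 1 = -(Xq n ^ n + 1) := by abel
  rw [h2, hn.neg_pow, mul_neg, h3] at h
  exact neg_injective h

lemma p_mul_psi (hn : Odd n) : (Xq n + 1) * psi n = Xq n ^ n + 1 := by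
  have hc : Commute (Xq n + 1) (psi n) :=
    (commute_x_psi.add_left (Commute.one_left _))
  rw [hc.eq]; exact psi_mul_p hn

/-- z = x^n + 1 is central -/
lemma z_central (r : QR n) : (Xq n ^ n + 1) * r = r * (Xq n ^ n + 1) := by
  rw [add_mul, mul_add, one_mul, mul_one, t_central]

lemma z_mul_t : (Xq n ^ n + 1) * Xq n ^ n = Xq n ^ n + 1 := by
  have h2 : Xq n ^ n * Xq n ^ n = 1 := by
    rw [← pow_add, xq_pow]
    have : ((n + n : ℕ) : ZMod (2*n)) = 0 := by
      have : ((n + n : ℕ) : ZMod (2*n)) = ((2*n : ℕ) : ZMod (2*n)) := by ring_nf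
      simp [this]
    rw [this, ← one_def, og_one]
  rw [add_mul, h2, one_mul, add_comm]

end Aux

namespace Aux

open GaussianInt in
example : True := trivial

noncomputable def eps {n : ℕ} (i : ZMod (2*n)) : ℤ := (-1) ^ i.val

lemma neg_one_pow_mod (N k : ℕ) (hN : Even N) : ((-1 : ℤ)) ^ (k % N) = (-1) ^ k := by
  conv_rhs => rw [← Nat.div_add_mod k N]
  rw [pow_add, pow_mul, hN.neg_one_pow, one_pow, one_mul]

lemma eps_add (hn0 : n ≠ 0) (i j : ZMod (2*n)) : eps (i + j) = eps i * eps j := by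
  haveI : NeZero (2*n) := ⟨by omega⟩
  unfold eps
  rw [ZMod.val_add, neg_one_pow_mod _ _ (by simp [Nat.even_mul]), pow_add]

lemma eps_sq (i : ZMod (2*n)) : eps i * eps i = 1 := by
  unfold eps
  rw [← pow_add, Even.neg_one_pow ⟨i.val, rfl⟩]

lemma eps_n (hn : Odd n) : eps ((n : ℕ) : ZMod (2*n)) = -1 := by
  unfold eps
  have := hn.pos
  rw [ZMod.val_natCast_of_lt (by omega), hn.neg_one_pow]

/-- the multiplicative map to the Gaussian integers -/
noncomputable def Fg (n : ℕ) (hn : Odd n) : QuaternionGroup n →* GaussianInt where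
  toFun := fun σ => match σ with
    | QuaternionGroup.a i => (eps i : GaussianInt)
    | QuaternionGroup.xa i => (eps i : GaussianInt) * ⟨0, 1⟩
  map_one' := by
    haveI : NeZero (2*n) := ⟨by have := hn.pos; omega⟩
    show ((eps (0 : ZMod (2*n)) : ℤ) : GaussianInt) = 1
    unfold eps; rw [ZMod.val_zero]; norm_num
  map_mul' := by
    have hn0 : n ≠ 0 := by have := hn.pos; omega
    have key : ∀ i j : ZMod (2*n), eps (j - i) = eps i * eps j := by
      intro i j
      have : eps (j - i + i) = eps (j - i) * eps i := eps_add hn0 _ _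
      rw [sub_add_cancel] at this
      calc eps (j - i) = eps (j - i) * (eps i * eps i) := by rw [eps_sq, mul_one]
        _ = eps j * eps i := by rw [← mul_assoc, ← this]
        _ = eps i * eps j := mul_comm _ _
    have hii : (⟨0,1⟩ : GaussianInt) * ⟨0,1⟩ = -1 := by
      ext <;> simp [Zsqrtd.re_mul, Zsqrtd.im_mul]
    rintro (i | i) (j | j) <;>
      simp only [QuaternionGroup.a_mul_a, QuaternionGroup.a_mul_xa,
        QuaternionGroup.xa_mul_a, QuaternionGroup.xa_mul_xa]
    · push_cast [eps_add hn0]; ring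
    · push_cast [key]; ring
    · push_cast [eps_add hn0]; ring
    · -- xa i * xa j = a (n + j - i)
      have : eps ((n : ZMod (2*n)) + j - i) = -(eps i * eps j) := by
        have h1 : ((n : ZMod (2*n)) + j - i) = (j - i) + (n : ZMod (2*n)) := by ring
        rw [h1, eps_add hn0, key, eps_n hn]; ring
      rw [this,
        show ((eps i : GaussianInt) * ⟨0,1⟩ * ((eps j : GaussianInt) * ⟨0,1⟩) : GaussianInt)
          = (eps i : GaussianInt) * (eps j : GaussianInt) * (⟨0,1⟩*(⟨0,1⟩:GaussianInt)) from by ring,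
        hii]
      push_cast; ring

noncomputable def theta (n : ℕ) (hn : Odd n) : QR n →ₐ[ℤ] GaussianInt :=
  MonoidAlgebra.lift ℤ GaussianInt (QuaternionGroup n) (Fg n hn)

end Aux

namespace Aux

lemma Fg_a (hn : Odd n) (j : ZMod (2*n)) :
    Fg n hn (QuaternionGroup.a j) = ((eps j : ℤ) : GaussianInt) := rfl

lemma Fg_xa (hn : Odd n) (j : ZMod (2*n)) :
    Fg n hn (QuaternionGroup.xa j) = ((eps j : ℤ) : GaussianInt) * ⟨0,1⟩ := rfl

lemma theta_of (hn : Odd n) (σ : QuaternionGroup n) : theta n hn (og σ) = Fg n hn σ :=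
  MonoidAlgebra.lift_of (Fg n hn) σ

lemma og_a_eq (j : ZMod (2*n)) (hn0 : n ≠ 0) : og (QuaternionGroup.a j) = Xq n ^ j.val := by
  haveI : NeZero (2*n) := ⟨by omega⟩
  rw [xq_pow, ZMod.natCast_rightInverse j]

lemma og_xa_eq (j : ZMod (2*n)) (hn0 : n ≠ 0) : og (QuaternionGroup.xa j) = Yq n * Xq n ^ j.val := by
  rw [← og_a_eq j hn0, Yq, ← og, og_mul, QuaternionGroup.xa_mul_a, zero_add]

lemma theta_p (hn : Odd n) : theta n hn (Xq n + 1) = 0 := by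
  have := hn.pos
  haveI : Fact (1 < 2*n) := ⟨by omega⟩
  rw [map_add, map_one, Xq, ← og, theta_of, Fg_a]
  unfold eps
  rw [ZMod.val_one]
  norm_num

lemma theta_Ip (hn : Odd n) {r : QR n} (hr : r ∈ Ip n) : theta n hn r = 0 := by
  obtain ⟨d, rfl⟩ := Ideal.mem_span_singleton'.mp hr
  rw [map_mul, theta_p, mul_zero]

lemma theta_split (hn : Odd n) (r : QR n) :
    r - ((theta n hn r).re : QR n) - ((theta n hn r).im : QR n) * Yq n ∈ Ip n := by
  have hn0 : n ≠ 0 := by have := hn.pos; omega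
  induction r using MonoidAlgebra.induction_on with
  | of σ =>
      rcases σ with j | j
      · rw [show of ℤ (QuaternionGroup n) (QuaternionGroup.a j) = og (QuaternionGroup.a j) from rfl,
          theta_of, Fg_a]
        have h1 : (((eps j : ℤ) : GaussianInt)).re = eps j := by simp
        have h2 : (((eps j : ℤ) : GaussianInt)).im = 0 := by simp
        rw [h1, h2, og_a_eq j hn0]
        unfold eps
        push_cast
        simpa using x_pow_sub_mem j.val
      · rw [show of ℤ (QuaternionGroup n) (QuaternionGroup.xa j) = og (QuaternionGroup.xa j) from rfl,
          theta_of, Fg_xa]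
        have h1 : (((eps j : ℤ) : GaussianInt) * ⟨0,1⟩).re = 0 := by simp [Zsqrtd.re_mul]
        have h2 : (((eps j : ℤ) : GaussianInt) * ⟨0,1⟩).im = eps j := by simp [Zsqrtd.im_mul]
        rw [h1, h2, og_xa_eq j hn0]
        have hcomm : ((eps j : QR n)) * Yq n = Yq n * ((eps j : QR n)) :=
          (Int.cast_commute (eps j) (Yq n)).eq
        rw [Int.cast_zero, sub_zero, hcomm, ← mul_sub]
        refine Ideal.mul_mem_left _ _ ?_
        unfold eps; push_cast
        simpa using x_pow_sub_mem j.val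
  | add f g hf hg =>
      rw [map_add]
      have heq : f + g - ((((theta n hn) f).re + ((theta n hn) g).re : ℤ) : QR n)
          - ((((theta n hn) f).im + ((theta n hn) g).im : ℤ) : QR n) * Yq n
          = (f - (((theta n hn) f).re : QR n) - (((theta n hn) f).im : QR n) * Yq n)
          + (g - (((theta n hn) g).re : QR n) - (((theta n hn) g).im : QR n) * Yq n) := by
        push_cast; noncomm_ring
      rw [show ((theta n hn) f + (theta n hn) g).re = ((theta n hn) f).re + ((theta n hn) g).re from rfl,
        show ((theta n hn) f + (theta n hn) g).im = ((theta n hn) f).im + ((theta n hn) g).im from rfl]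
      rw [heq]
      exact add_mem hf hg
  | smul r f hf =>
      have hsm : (theta n hn) (r • f) = (r : GaussianInt) * (theta n hn) f := by
        rw [map_smul, zsmul_eq_mul]
      have hre : ((r : GaussianInt) * (theta n hn) f).re = r * ((theta n hn) f).re := by
        simp [Zsqrtd.re_mul]
      have him : ((r : GaussianInt) * (theta n hn) f).im = r * ((theta n hn) f).im := by
        simp [Zsqrtd.im_mul]
      rw [hsm, hre, him]
      have heq : r • f - ((r * ((theta n hn) f).re : ℤ) : QR n)
          - ((r * ((theta n hn) f).im : ℤ) : QR n) * Yq n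
          = r • (f - (((theta n hn) f).re : QR n) - (((theta n hn) f).im : QR n) * Yq n) := by
        push_cast
        rw [zsmul_eq_mul, zsmul_eq_mul]
        noncomm_ring
      rw [heq]
      exact Submodule.smul_of_tower_mem _ r hf

lemma theta_ker (hn : Odd n) {r : QR n} (h : theta n hn r = 0) : r ∈ Ip n := by
  have h2 := theta_split hn r
  rw [h] at h2
  simpa using h2

lemma theta_g (hn : Odd n) (a b : ℤ) : theta n hn ((a : QR n) + (b : QR n) * Yq n) = ⟨a, b⟩ := by
  rw [map_add, map_mul, map_intCast, map_intCast, Yq, ← og, theta_of, Fg_xa]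
  have h0 : eps (0 : ZMod (2*n)) = 1 := by unfold eps; simp
  rw [h0]
  ext <;> simp [Zsqrtd.re_mul, Zsqrtd.im_mul]

lemma mul_g_mem (hn : Odd n) {a b : ℤ} (hab : ¬(a = 0 ∧ b = 0)) {r : QR n}
    (h : r * ((a : QR n) + (b : QR n) * Yq n) ∈ Ip n) : r ∈ Ip n := by
  have h0 : theta n hn (r * ((a : QR n) + (b : QR n) * Yq n)) = 0 := theta_Ip hn h
  rw [map_mul, theta_g] at h0
  have hg : (⟨a, b⟩ : GaussianInt) ≠ 0 := by
    intro hc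
    rw [Zsqrtd.ext_iff] at hc
    exact hab ⟨hc.1, hc.2⟩
  rcases mul_eq_zero.mp h0 with h1 | h1
  · exact theta_ker hn h1
  · exact absurd h1 hg

end Aux

namespace Aux

lemma nsmul_cancel (hn0 : n ≠ 0) {v : QR n} (h : (n : ℕ) • v = 0) : v = 0 := by
  ext σ
  have h2 : ((n : ℕ) • v).coeff σ = 0 := by rw [h]; rfl
  rw [MonoidAlgebra.coeff_smul_apply] at h2
  have : (n : ℤ) * v.coeff σ = 0 := by rw [← h2]; simp [nsmul_eq_mul]
  rcases mul_eq_zero.mp this with h3 | h3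
  · exact absurd (by exact_mod_cast h3) hn0
  · simpa using h3

lemma div_z (hn : Odd n) {ρ w : QR n} (h : (n : ℕ) • ρ = w * (Xq n ^ n + 1)) :
    ∃ w', w' * (Xq n ^ n + 1) = ρ := by
  have hn0 : n ≠ 0 := by have := hn.pos; omega
  have key : ρ * Xq n ^ n = ρ := by
    have h1 : (n:ℕ) • (ρ * Xq n ^ n - ρ) = 0 := by
      rw [smul_sub, ← smul_mul_assoc, h, mul_assoc, z_mul_t]
      exact sub_self _
    have := nsmul_cancel hn0 h1
    rwa [sub_eq_zero] at this
  have hz : ρ * (Xq n ^ n + 1) = ρ + ρ := by rw [mul_add, mul_one, key]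
  obtain ⟨m, hm⟩ := hn
  refine ⟨(m+1) • ρ - w, ?_⟩
  rw [sub_mul, smul_mul_assoc, hz, ← h, smul_add, ← add_nsmul]
  have h4 : (m + 1 + (m + 1)) = n + 1 := by omega
  rw [h4, succ_nsmul]
  abel

lemma psi_inf_p (hn : Odd n) {ρ : QR n} (h1 : ρ ∈ Ideal.span {psi n}) (h2 : ρ ∈ Ip n) :
    ρ ∈ Ideal.span ({Xq n ^ n + 1} : Set (QR n)) := by
  obtain ⟨u, hu⟩ := Ideal.mem_span_singleton'.mp h1
  obtain ⟨t₁, ht⟩ := Ideal.mem_span_singleton'.mp h2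
  obtain ⟨c, hc, hpsic⟩ := psi_plus (n := n)
  have hzc : (Xq n ^ n + 1) * c = c * (Xq n ^ n + 1) :=
    ((hc.pow_left n).add_left (Commute.one_left c)).eq
  have hmain : (n : ℕ) • ρ = (t₁ + u * c) * (Xq n ^ n + 1) := by
    have e1 : (n : ℕ) • ρ = ρ * ((n : ℕ) : QR n) := by
      rw [nsmul_eq_mul, (Nat.cast_commute (n:ℕ) ρ).eq]
    have e2 : ρ * psi n = t₁ * (Xq n ^ n + 1) := by
      rw [← ht, mul_assoc, p_mul_psi hn]
    have e3 : ρ * (Xq n + 1) = u * (Xq n ^ n + 1) := by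
      rw [← hu, mul_assoc, psi_mul_p hn]
    rw [e1, ← hpsic, mul_add, ← mul_assoc, e2, e3, mul_assoc, hzc, ← mul_assoc, ← add_mul]
  obtain ⟨w', hw⟩ := div_z hn hmain
  exact Ideal.mem_span_singleton'.mpr ⟨w', hw⟩

lemma z_mem_psi (hn : Odd n) {ρ : QR n} (h : ρ ∈ Ideal.span ({Xq n ^ n + 1} : Set (QR n))) :
    ρ ∈ Ideal.span {psi n} := by
  obtain ⟨w, rfl⟩ := Ideal.mem_span_singleton'.mp h
  exact Ideal.mem_span_singleton'.mpr ⟨w * (Xq n + 1), by rw [mul_assoc, p_mul_psi hn]⟩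

lemma z_mem_Ip (hn : Odd n) {ρ : QR n} (h : ρ ∈ Ideal.span ({Xq n ^ n + 1} : Set (QR n))) :
    ρ ∈ Ip n := by
  obtain ⟨w, rfl⟩ := Ideal.mem_span_singleton'.mp h
  exact Ideal.mem_span_singleton'.mpr ⟨w * psi n, by rw [mul_assoc, psi_mul_p hn]⟩

end Aux


namespace Aux

variable {a b : ℤ}

lemma conj_g : ((a:QR n) - (b:QR n) * Yq n) * ((a:QR n) + (b:QR n) * Yq n)
    = (a^2 : ℤ) • (1 : QR n) - (b^2 : ℤ) • Xq n ^ n := by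
  set A := (a:QR n); set B := (b:QR n); set Y := Yq n
  have h1 : Y * A = A * Y := (Int.cast_commute a Y).eq.symm
  have h2 : Y * B = B * Y := (Int.cast_commute b Y).eq.symm
  have h3 : A * B = B * A := (Int.cast_commute a B).eq
  have expand : (A - B*Y) * (A + B*Y) = A*A + A*(B*Y) - (B*Y)*A - (B*Y)*(B*Y) := by
    noncomm_ring
  have e1 : (B*Y)*A = A*(B*Y) := by
    rw [mul_assoc, h1, ← mul_assoc, ← h3, mul_assoc]
  have e2 : (B*Y)*(B*Y) = (B*B)*(Y*Y) := by
    rw [mul_assoc, ← mul_assoc Y B Y, h2, mul_assoc, ← mul_assoc]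
  rw [expand, e1, e2, yq_sq]
  have hA : A * A = (a^2 : ℤ) • (1 : QR n) := by
    rw [zsmul_eq_mul, mul_one]; push_cast [sq]; rfl
  have hB : B * B = (b^2 : ℤ) • (1 : QR n) := by
    rw [zsmul_eq_mul, mul_one]; push_cast [sq]; rfl
  rw [hA, hB, smul_mul_assoc, one_mul]
  abel

/-- the magic element of P with `π = 1 + v(xⁿ-1)` -/
noncomputable def pie (n : ℕ) (a b u v : ℤ) : QR n :=
  u • (((a:QR n) - (b:QR n) * Yq n) * ((a:QR n) + (b:QR n) * Yq n))
    + (u*b^2+v) • (psi n * (Xq n + 1))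

lemma pie_mem (u v : ℤ) : pie n a b u v ∈ Pideal n a b := by
  refine add_mem (Submodule.smul_of_tower_mem _ u ?_) (Submodule.smul_of_tower_mem _ _ ?_)
  · exact Ideal.mul_mem_left _ _ (Ideal.subset_span (by simp))
  · exact Ideal.mul_mem_left _ _ (Ideal.subset_span (by simp))

lemma pie_eq (hn : Odd n) {u v : ℤ} (hsol : u * (a^2+b^2) + v * 2 = 1) :
    pie n a b u v = 1 + v • (Xq n ^ n - 1) := by
  have h2 : pie n a b u v = (u * (a^2+b^2) + v * 2) • (1 : QR n) + v • (Xq n ^ n - 1) := by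
    unfold pie
    rw [conj_g, psi_mul_p hn]
    module
  rwa [hsol, one_smul] at h2

end Aux


namespace Aux

lemma z_mul_pie {u v : ℤ} (hn : Odd n) (hsol : u * (a^2+b^2) + v * 2 = 1) :
    (Xq n ^ n + 1) * pie n a b u v = Xq n ^ n + 1 := by
  rw [pie_eq hn hsol, mul_add, mul_one, mul_smul_comm, mul_sub, mul_one, z_mul_t,
    sub_self, smul_zero, add_zero]

lemma spanZP_eq (hn : Odd n) {u v : ℤ} (hsol : u * (a^2+b^2) + v * 2 = 1) :
    Submodule.span (QR n) ((fun w => (Xq n ^ n + 1) * w) '' ((Pideal n a b : Set (QR n))))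
      = (Ideal.span {Xq n ^ n + 1} : Ideal (QR n)) := by
  apply le_antisymm
  · rw [Submodule.span_le]
    rintro _ ⟨w, _, rfl⟩
    exact Ideal.mem_span_singleton'.mpr ⟨w, (z_central w).symm⟩
  · have hz : (Xq n ^ n + 1) ∈ Submodule.span (QR n)
        ((fun w => (Xq n ^ n + 1) * w) '' ((Pideal n a b : Set (QR n)))) := by
      refine Submodule.subset_span ⟨pie n a b u v, pie_mem u v, ?_⟩
      exact z_mul_pie hn hsol
    rw [Ideal.span_le]
    intro w hw
    rw [Set.mem_singleton_iff] at hw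
    subst hw
    exact hz

/-- kernel ideal K = ⟨ψ, x+1⟩ -/
noncomputable def Kideal (n : ℕ) : Ideal (QR n) := Ideal.span {psi n, Xq n + 1}

lemma Ip_le_K : Ip n ≤ Kideal n := Ideal.span_mono (by intro x hx; right; exact hx)

lemma psi_mem_K : psi n ∈ Kideal n := Ideal.subset_span (by left; rfl)

lemma n_mem_K : ((n : ℕ) : QR n) ∈ Kideal n := by
  obtain ⟨c, hc, hpsic⟩ := psi_plus (n := n)
  rw [← hpsic]
  refine add_mem psi_mem_K ?_
  have : (Xq n + 1) * c = c * (Xq n + 1) := ((hc.add_left (Commute.one_left c))).eq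
  rw [this]
  exact Ideal.mul_mem_left _ _ (Ideal.subset_span (by right; rfl))

lemma reduce_K (hn0 : n ≠ 0) (r : QR n) :
    ∃ u v : ℤ, r - (u : QR n) - (v : QR n) * Yq n ∈ Kideal n := by
  induction r using MonoidAlgebra.induction_on with
  | of σ =>
      rcases σ with j | j
      · refine ⟨(-1)^j.val, 0, ?_⟩
        rw [show of ℤ (QuaternionGroup n) (QuaternionGroup.a j) = og (QuaternionGroup.a j) from rfl,
          og_a_eq j hn0]
        push_cast
        simpa using Ip_le_K (x_pow_sub_mem j.val)
      · refine ⟨0, (-1)^j.val, ?_⟩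
        rw [show of ℤ (QuaternionGroup n) (QuaternionGroup.xa j) = og (QuaternionGroup.xa j) from rfl,
          og_xa_eq j hn0]
        push_cast
        rw [sub_zero]
        have hcm : ((-1 : QR n))^j.val * Yq n = Yq n * ((-1:QR n))^j.val := by
          have : ((-1 : QR n)) = ((-1 : ℤ) : QR n) := by push_cast; rfl
          rw [this, ← Int.cast_pow]
          exact (Int.cast_commute _ (Yq n)).eq
        rw [hcm, ← mul_sub]
        exact Ip_le_K (Ideal.mul_mem_left _ _ (x_pow_sub_mem j.val))
  | add f g hf hg =>
      obtain ⟨u1, v1, h1⟩ := hf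
      obtain ⟨u2, v2, h2⟩ := hg
      refine ⟨u1 + u2, v1 + v2, ?_⟩
      have : f + g - ((u1 + u2 : ℤ) : QR n) - ((v1 + v2 : ℤ) : QR n) * Yq n
          = (f - (u1 : QR n) - (v1 : QR n) * Yq n) + (g - (u2 : QR n) - (v2 : QR n) * Yq n) := by
        push_cast; noncomm_ring
      rw [this]
      exact add_mem h1 h2
  | smul r f hf =>
      obtain ⟨u1, v1, h1⟩ := hf
      refine ⟨r * u1, r * v1, ?_⟩
      have : r • f - ((r * u1 : ℤ) : QR n) - ((r * v1 : ℤ) : QR n) * Yq n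
          = r • (f - (u1 : QR n) - (v1 : QR n) * Yq n) := by
        push_cast
        rw [zsmul_eq_mul, zsmul_eq_mul]
        noncomm_ring
      rw [this]
      exact Submodule.smul_of_tower_mem _ r h1

lemma coeff_dvd (n : ℕ) (u v : ℤ)
    (h : (u : Sn n) + (v : Sn n) * (Ideal.Quotient.mk _ (X : Polynomial (ZMod n))) = 0) :
    (n:ℤ) ∣ u ∧ (n:ℤ) ∣ v := by
  set q : Polynomial (ZMod n) :=
    Polynomial.C ((u:ℤ) : ZMod n) + Polynomial.C ((v:ℤ) : ZMod n) * X with hqdef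
  have hCu : Polynomial.C ((u:ℤ) : ZMod n) = ((u : ℤ) : Polynomial (ZMod n)) :=
    map_intCast (Polynomial.C : ZMod n →+* Polynomial (ZMod n)) u
  have hCv : Polynomial.C ((v:ℤ) : ZMod n) = ((v : ℤ) : Polynomial (ZMod n)) :=
    map_intCast (Polynomial.C : ZMod n →+* Polynomial (ZMod n)) v
  have hmk : ((u : Sn n) + (v : Sn n) * (Ideal.Quotient.mk _ (X : Polynomial (ZMod n))))
      = Ideal.Quotient.mk _ q := by
    rw [hqdef, map_add, map_mul, hCu, hCv, map_intCast, map_intCast]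
  rw [hmk, Ideal.Quotient.eq_zero_iff_mem, Ideal.mem_span_singleton] at h
  have hq0 : q = 0 := by
    by_contra h0
    haveI : Nontrivial (ZMod n) := by
      rcases subsingleton_or_nontrivial (ZMod n) with hs | hs
      · exact absurd (Subsingleton.elim q 0) h0
      · exact hs
    have hmonic : ((X : Polynomial (ZMod n))^2 + 1).Monic := by
      apply Polynomial.monic_X_pow_add
      exact lt_of_le_of_lt Polynomial.degree_one_le (by norm_num)
    refine hmonic.not_dvd_of_natDegree_lt h0 ?_ h
    have hd : q.natDegree ≤ 1 := by
      refine le_trans (Polynomial.natDegree_add_le _ _) ?_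
      simp only [Polynomial.natDegree_C, Nat.zero_le, max_le_iff, true_and]
      refine le_trans (Polynomial.natDegree_mul_le) ?_
      simp
    have hd2 : ((X : Polynomial (ZMod n))^2 + 1).natDegree = 2 := by
      have h1 : ((X : Polynomial (ZMod n))^2 + 1) = X^2 + Polynomial.C 1 := by rw [map_one]
      rw [h1, Polynomial.natDegree_X_pow_add_C]
    omega
  constructor
  · have h1 : q.coeff 0 = 0 := by rw [hq0]; simp
    rw [hqdef] at h1
    simp only [Polynomial.coeff_add, Polynomial.coeff_C_mul, Polynomial.coeff_X_zero,
      Polynomial.coeff_C_zero, mul_zero, add_zero] at h1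
    rw [← ZMod.intCast_zmod_eq_zero_iff_dvd]
    exact h1
  · have h1 : q.coeff 1 = 0 := by rw [hq0]; simp
    rw [hqdef] at h1
    simp only [Polynomial.coeff_add, Polynomial.coeff_C_mul, Polynomial.coeff_X_one,
      Polynomial.coeff_C, mul_one] at h1
    rw [← ZMod.intCast_zmod_eq_zero_iff_dvd]
    simpa using h1

end Aux

namespace Aux

variable {φ : QR n →+* Sn n}

lemma phi_p (hφx : φ (Xq n) = -1) : φ (Xq n + 1) = 0 := by
  rw [map_add, hφx, map_one, neg_add_cancel]

lemma phi_psi (hφx : φ (Xq n) = -1) : φ (psi n) = 0 := by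
  unfold psi
  rw [map_sum]
  have : ∀ k ∈ Finset.range n, φ ((-1 : QR n)^k * Xq n ^ k) = 1 := by
    intro k _
    rw [map_mul, map_pow, map_pow, hφx, map_neg, map_one, ← mul_pow]
    norm_num
  rw [Finset.sum_congr rfl this, Finset.sum_const, Finset.card_range, nsmul_eq_mul, mul_one]
  calc ((n : ℕ) : Sn n) = Ideal.Quotient.mk _ ((n:ℕ) : Polynomial (ZMod n)) :=
        (map_natCast (Ideal.Quotient.mk _) n).symm
    _ = Ideal.Quotient.mk _ (Polynomial.C ((n:ℕ) : ZMod n)) := by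
        rw [map_natCast (Polynomial.C : ZMod n →+* Polynomial (ZMod n)) n]
    _ = 0 := by rw [ZMod.natCast_self, map_zero, map_zero]

lemma K_le_ker (hφx : φ (Xq n) = -1) {r : QR n} (hr : r ∈ Kideal n) : φ r = 0 := by
  obtain ⟨c, d, rfl⟩ := Ideal.mem_span_pair.mp hr
  rw [map_add, map_mul, map_mul, phi_psi hφx, phi_p hφx, mul_zero, mul_zero, add_zero]

lemma ker_le_K (hn : Odd n) (hφx : φ (Xq n) = -1)
    (hφy : φ (Yq n) = Ideal.Quotient.mk _ (X : Polynomial (ZMod n)))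
    {r : QR n} (h : φ r = 0) : r ∈ Kideal n := by
  have hn0 : n ≠ 0 := by have := hn.pos; omega
  obtain ⟨u, v, hr⟩ := reduce_K hn0 r
  have h2 : φ (r - (u : QR n) - (v : QR n) * Yq n) = 0 := K_le_ker hφx hr
  rw [map_sub, map_sub, map_mul, map_intCast, map_intCast, h, hφy, zero_sub] at h2
  have h3 : (u : Sn n) + (v : Sn n) * (Ideal.Quotient.mk _ (X : Polynomial (ZMod n))) = 0 := by
    linear_combination -h2
  obtain ⟨hu, hv⟩ := coeff_dvd n u v h3
  obtain ⟨u2, rfl⟩ := hu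
  obtain ⟨v2, rfl⟩ := hv
  have hru : r = (r - ((n * u2 : ℤ) : QR n) - ((n * v2 : ℤ) : QR n) * Yq n)
      + (((n * u2 : ℤ) : QR n) + ((n * v2 : ℤ) : QR n) * Yq n) := by noncomm_ring
  rw [hru]
  refine add_mem hr (add_mem ?_ ?_)
  · have : ((n * u2 : ℤ) : QR n) = (u2 : QR n) * ((n:ℕ) : QR n) := by
      rw [show (n : ℤ) * u2 = u2 * (n:ℤ) from mul_comm _ _, Int.cast_mul, Int.cast_natCast]
    rw [this]
    exact Ideal.mul_mem_left _ _ n_mem_K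
  · have : ((n * v2 : ℤ) : QR n) * Yq n = ((v2 : QR n) * Yq n) * ((n:ℕ) : QR n) := by
      rw [show (n : ℤ) * v2 = v2 * (n:ℤ) from mul_comm _ _, Int.cast_mul, Int.cast_natCast,
        mul_assoc, (Nat.cast_commute (n:ℕ) (Yq n)).eq, ← mul_assoc]
    rw [this]
    exact Ideal.mul_mem_left _ _ n_mem_K

end Aux



set_option maxHeartbeats 1000000 in
open Aux in
/-- `P/⟨xⁿ+1⟩P` is isomorphic over `ℤQ_{4n}/⟨xⁿ+1⟩` to the pullback module
`{(e,f) ∈ ℤQ_{4n}/⟨ψ_{2n}⟩ ⊕ ℤQ_{4n}/⟨x+1⟩ : ē = (a+by)·f̄ in Z_n[y]/⟨y²+1⟩}`,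
where the reductions into `Z_n[y]/⟨y²+1⟩` are induced by the ring homomorphism
`φ : ℤQ_{4n} → Z_n[y]/⟨y²+1⟩` with `φ(x) = -1`, `φ(y) = y`.  The isomorphism is
expressed by an injective `ℤQ_{4n}`-linear map whose range is exactly the pullback. -/
theorem stmt8 (n : ℕ) (a b : ℤ) (hn : Odd n)
    (hco : Int.gcd (a ^ 2 + b ^ 2) (2 * n) = 1)
    (φ : QR n →+* Sn n)
    (hφx : φ (Xq n) = -1)
    (hφy : φ (Yq n) = Ideal.Quotient.mk _ (X : Polynomial (ZMod n))) :
    ∃ j : (Pideal n a b ⧸ xnP n a b) →ₗ[QR n]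
        (QR n ⧸ Ideal.span {psi n}) × (QR n ⧸ Ideal.span {Xq n + 1}),
      Function.Injective j ∧
      (LinearMap.range j : Set ((QR n ⧸ Ideal.span {psi n}) × (QR n ⧸ Ideal.span {Xq n + 1}))) =
        {ef | ∃ e f : QR n,
          Submodule.Quotient.mk e = ef.1 ∧ Submodule.Quotient.mk f = ef.2 ∧
          φ e = φ ((a : QR n) + (b : QR n) * Yq n) * φ f} := by
  classical
  have hn0 : n ≠ 0 := by have := hn.pos; omega
  have hab : ¬(a = 0 ∧ b = 0) := by
    rintro ⟨rfl, rfl⟩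
    have h1 : ((0:ℤ)^2 + (0:ℤ)^2) = 0 := by norm_num
    rw [h1, Int.gcd_zero_left] at hco
    have h2 : ((2 * (n:ℤ))).natAbs = 2*n := by
      rw [show (2 * (n:ℤ)) = ((2*n : ℕ) : ℤ) from by push_cast; ring, Int.natAbs_natCast]
    rw [h2] at hco
    omega
  have hcop : IsCoprime (a^2+b^2) (2 : ℤ) :=
    (Int.isCoprime_iff_gcd_eq_one.mpr hco).of_isCoprime_of_dvd_right ⟨(n:ℤ), rfl⟩
  obtain ⟨u, v, hsol⟩ := hcop
  set g : QR n := (a : QR n) + (b : QR n) * Yq n with hgdef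
  have hgP : g ∈ Pideal n a b := Ideal.subset_span (by left; rfl)
  have hpP : Xq n + 1 ∈ Pideal n a b := Ideal.subset_span (by right; rfl)
  -- right-multiplication by g
  let Mg : QR n →ₗ[QR n] QR n :=
    { toFun := fun r => r * g
      map_add' := fun x y => add_mul x y g
      map_smul' := fun c x => by simp only [smul_eq_mul, RingHom.id_apply, mul_assoc] }
  have hIker : Ip n ≤ LinearMap.ker ((Ip n).mkQ ∘ₗ Mg) := by
    intro r hr
    simp only [LinearMap.mem_ker, LinearMap.comp_apply, Submodule.mkQ_apply]
    show Submodule.Quotient.mk (r * g) = 0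
    rw [Submodule.Quotient.mk_eq_zero]
    exact Ip_mul_mem hr g
  set T' : (QR n ⧸ Ip n) →ₗ[QR n] (QR n ⧸ Ip n) :=
    Submodule.liftQ (Ip n) ((Ip n).mkQ ∘ₗ Mg) hIker with hT'def
  have hT'mk : ∀ r : QR n, T' (Submodule.Quotient.mk r) = Submodule.Quotient.mk (r * g) :=
    fun r => rfl
  have hT'inj : Function.Injective T' := by
    rw [← LinearMap.ker_eq_bot, Submodule.eq_bot_iff]
    intro q hq
    obtain ⟨r, rfl⟩ := Submodule.mkQ_surjective (Ip n) q
    have h0 : T' (Submodule.Quotient.mk r) = 0 := LinearMap.mem_ker.mp hq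
    rw [hT'mk, Submodule.Quotient.mk_eq_zero] at h0
    show Submodule.Quotient.mk r = 0
    rw [Submodule.Quotient.mk_eq_zero]
    exact mul_g_mem hn hab h0
  set E2 : (Pideal n a b) →ₗ[QR n] (QR n ⧸ Ip n) := (Ip n).mkQ ∘ₗ (Pideal n a b).subtype
    with hE2def
  have hran : ∀ ρ : Pideal n a b, E2 ρ ∈ LinearMap.range T' := by
    intro ρ
    obtain ⟨r, s, hrs⟩ := Ideal.mem_span_pair.mp ρ.2
    refine ⟨Submodule.Quotient.mk r, ?_⟩
    rw [hT'mk]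
    show Submodule.Quotient.mk (r * g) = Submodule.Quotient.mk ((ρ : QR n))
    apply (Submodule.Quotient.eq _).mpr
    have : r * g - (ρ : QR n) = -(s * (Xq n + 1)) := by rw [← hrs]; abel
    rw [this]
    exact neg_mem (Ideal.mem_span_singleton'.mpr ⟨s, rfl⟩)
  set eqv := LinearEquiv.ofInjective T' hT'inj with heqv
  set D : (Pideal n a b) →ₗ[QR n] (QR n ⧸ Ip n) :=
    eqv.symm.toLinearMap ∘ₗ LinearMap.codRestrict (LinearMap.range T') E2 hran with hDdef
  have hDspec : ∀ ρ : Pideal n a b, T' (D ρ) = Submodule.Quotient.mk ((ρ : QR n)) := by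
    intro ρ
    have h1 : T' (D ρ) = ((eqv (eqv.symm (LinearMap.codRestrict (LinearMap.range T') E2 hran ρ)))
        : QR n ⧸ Ip n) := rfl
    rw [h1, eqv.apply_symm_apply]
    rfl
  set jt : (Pideal n a b) →ₗ[QR n] (QR n ⧸ (Ideal.span {psi n} : Ideal (QR n))) × (QR n ⧸ Ip n) :=
    LinearMap.prod ((Ideal.span {psi n} : Ideal (QR n)).mkQ ∘ₗ (Pideal n a b).subtype) D
    with hjtdef
  have hjt1 : ∀ ρ : Pideal n a b, (jt ρ).1 = Submodule.Quotient.mk ((ρ : QR n)) := fun ρ => rfl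
  have hjt2 : ∀ ρ : Pideal n a b, (jt ρ).2 = D ρ := fun ρ => rfl
  have hker : LinearMap.ker jt = xnP n a b := by
    ext ρ
    rw [LinearMap.mem_ker]
    have hmemiff : jt ρ = 0 ↔ ((ρ : QR n) ∈ (Ideal.span {psi n} : Ideal (QR n)) ∧ (ρ : QR n) ∈ Ip n) := by
      rw [Prod.ext_iff]
      constructor
      · rintro ⟨h1, h2⟩
        rw [hjt1, Prod.fst_zero] at h1
        rw [hjt2, Prod.snd_zero] at h2
        constructor
        · rwa [← Submodule.Quotient.mk_eq_zero]
        · have h3 : T' (D ρ) = 0 := by rw [h2]; exact map_zero T'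
          rw [hDspec] at h3
          rwa [← Submodule.Quotient.mk_eq_zero]
      · rintro ⟨h1, h2⟩
        constructor
        · rw [hjt1, Prod.fst_zero, Submodule.Quotient.mk_eq_zero]; exact h1
        · rw [hjt2, Prod.snd_zero]
          apply hT'inj
          rw [hDspec, map_zero, Submodule.Quotient.mk_eq_zero]
          exact h2
    rw [hmemiff]
    show _ ↔ ρ ∈ xnP n a b
    rw [xnP, Submodule.mem_comap, Submodule.subtype_apply, spanZP_eq hn hsol]
    constructor
    · rintro ⟨h1, h2⟩; exact psi_inf_p hn h1 h2
    · intro h; exact ⟨z_mem_psi hn h, z_mem_Ip hn h⟩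
  refine ⟨Submodule.liftQ (xnP n a b) jt (le_of_eq hker.symm), ?_, ?_⟩
  · rw [← LinearMap.ker_eq_bot]
    exact Submodule.ker_liftQ_eq_bot _ _ _ (le_of_eq hker)
  · have hrange : LinearMap.range (Submodule.liftQ (xnP n a b) jt (le_of_eq hker.symm))
        = LinearMap.range jt := Submodule.range_liftQ _ _ _
    erw [hrange]
    ext ef
    simp only [SetLike.mem_coe, LinearMap.mem_range, Set.mem_setOf_eq]
    constructor
    · rintro ⟨ρ, rfl⟩
      obtain ⟨r, s, hrs⟩ := Ideal.mem_span_pair.mp ρ.2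
      refine ⟨(ρ : QR n), r, (hjt1 ρ).symm, ?_, ?_⟩
      · refine Eq.trans ?_ (hjt2 ρ).symm
        apply hT'inj
        erw [hT'mk, hDspec]
        apply (Submodule.Quotient.eq _).mpr
        have : r * g - (ρ : QR n) = -(s * (Xq n + 1)) := by rw [← hrs]; abel
        rw [this]
        exact neg_mem (Ideal.mem_span_singleton'.mpr ⟨s, rfl⟩)
      · rw [← hrs, map_add, map_mul, map_mul, phi_p hφx, mul_zero, add_zero, mul_comm]
    · rintro ⟨e, f, h1, h2, h3⟩
      have hK : e - f * g ∈ Kideal n := by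
        apply ker_le_K hn hφx hφy
        rw [map_sub, map_mul, h3, mul_comm]
        ring
      obtain ⟨u1, s1, hus⟩ := Ideal.mem_span_pair.mp hK
      have hρ0P : f * g + s1 * (Xq n + 1) ∈ Pideal n a b :=
        add_mem (Ideal.mul_mem_left _ _ hgP) (Ideal.mul_mem_left _ _ hpP)
      refine ⟨⟨f * g + s1 * (Xq n + 1), hρ0P⟩, ?_⟩
      have hfst : (jt ⟨f * g + s1 * (Xq n + 1), hρ0P⟩).1 = ef.1 := by
        rw [hjt1, ← h1]
        apply (Submodule.Quotient.eq _).mpr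
        have : (f * g + s1 * (Xq n + 1)) - e = -(u1 * psi n) := by
          have he : e = f * g + (u1 * psi n + s1 * (Xq n + 1)) := by rw [hus]; abel
          rw [he]; abel
        rw [this]
        exact neg_mem (Ideal.mem_span_singleton'.mpr ⟨u1, rfl⟩)
      have hsnd : (jt ⟨f * g + s1 * (Xq n + 1), hρ0P⟩).2 = ef.2 := by
        rw [hjt2, ← h2]
        apply hT'inj
        erw [hDspec, hT'mk]
        apply (Submodule.Quotient.eq _).mpr
        have : (f * g + s1 * (Xq n + 1)) - f * g = s1 * (Xq n + 1) := by abel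
        rw [this]
        exact Ideal.mem_span_singleton'.mpr ⟨s1, rfl⟩
      exact Prod.ext hfst hsnd
end

section
/- Let n be odd, gcd(a²+b², 2n)=1, and P = ⟨a+by, x+1⟩ ⊆ ZQ_{4n}. Then P is isomorphic as a ZQ_{4n}-module to the pullback {(c,d) ∈ P/⟨x^n+1⟩P ⊕ ZD_{2n} : c̄ = d̄ in F₂D_{2n}}. -/
open MonoidAlgebra

abbrev ZD (n : ℕ) : Type := MonoidAlgebra ℤ (DihedralGroup n)

abbrev F2D (n : ℕ) : Type := MonoidAlgebra (ZMod 2) (DihedralGroup n)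

namespace Stmt9Aux
open QuaternionGroup DihedralGroup Finsupp

def phi (n : ℕ) : QuaternionGroup n → DihedralGroup n
  | .a i => .r (i.val : ZMod n)
  | .xa i => .sr (i.val : ZMod n)

def sig (n : ℕ) : DihedralGroup n → QuaternionGroup n
  | .r j => .a (j.val : ZMod (2 * n))
  | .sr j => .xa (j.val : ZMod (2 * n))

lemma Xq_pow (n k : ℕ) : Xq n ^ k = of ℤ (QuaternionGroup n) (.a (k : ZMod (2 * n))) := by
  rw [Xq, ← map_pow, a_one_pow]

lemma hnn (n : ℕ) : ((n : ZMod (2 * n)) + n) = 0 := by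
  rw [← Nat.cast_add, ← two_mul, ZMod.natCast_self]

lemma an_central (n : ℕ) (g : QuaternionGroup n) :
    QuaternionGroup.a (n : ZMod (2 * n)) * g = g * QuaternionGroup.a (n : ZMod (2 * n)) := by
  cases g with
  | a i => rw [a_mul_a, a_mul_a, add_comm]
  | xa i =>
    rw [a_mul_xa, xa_mul_a]
    congr 1
    rw [sub_eq_iff_eq_add, add_assoc, hnn, add_zero]

lemma Xqn_comm (n : ℕ) (w : QR n) : (Xq n ^ n) * w = w * (Xq n ^ n) := by
  rw [Xq_pow]
  induction w using MonoidAlgebra.induction_on with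
  | of g => rw [← map_mul, ← map_mul, an_central]
  | add f g hf hg => rw [mul_add, add_mul, hf, hg]
  | smul r f hf => rw [mul_smul_comm, smul_mul_assoc, hf]

lemma Xqn1_comm (n : ℕ) (w : QR n) : (Xq n ^ n + 1) * w = w * (Xq n ^ n + 1) := by
  rw [add_mul, mul_add, one_mul, mul_one, Xqn_comm]

section F2
variable {n : ℕ} (f2 : QR n →+* ZD n)
  (hf2x : f2 (Xq n) = of ℤ (DihedralGroup n) (DihedralGroup.r 1))
  (hf2y : f2 (Yq n) = of ℤ (DihedralGroup n) (DihedralGroup.sr 0))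

include hf2x hf2y

lemma f2_of [NeZero n] (g : QuaternionGroup n) :
    f2 (of ℤ (QuaternionGroup n) g) = of ℤ (DihedralGroup n) (phi n g) := by
  haveI : NeZero (2 * n) := ⟨by have := NeZero.ne n; omega⟩
  have ha : ∀ i : ZMod (2 * n), f2 (of ℤ (QuaternionGroup n) (.a i)) =
      of ℤ (DihedralGroup n) (.r (i.val : ZMod n)) := by
    intro i
    have h1 : (QuaternionGroup.a i : QuaternionGroup n) = QuaternionGroup.a 1 ^ i.val := by
      rw [a_one_pow, ZMod.natCast_val, ZMod.cast_id]
    rw [h1, map_pow, map_pow, ← Xq, hf2x, ← map_pow, r_one_pow]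
  cases g with
  | a i => exact ha i
  | xa i =>
    show _ = of ℤ (DihedralGroup n) (DihedralGroup.sr (i.val : ZMod n))
    have h1 : (QuaternionGroup.xa i : QuaternionGroup n) =
        QuaternionGroup.xa 0 * QuaternionGroup.a i := by
      rw [xa_mul_a, zero_add]
    rw [h1, map_mul, map_mul, ← Yq, hf2y, ha, ← map_mul, sr_mul_r, zero_add]

lemma f2_single [NeZero n] (g : QuaternionGroup n) (c : ℤ) :
    f2 (MonoidAlgebra.single g c) = MonoidAlgebra.single (phi n g) c := by
  have h1 : (MonoidAlgebra.single g c : QR n) = (c : QR n) * of ℤ (QuaternionGroup n) g := by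
    rw [MonoidAlgebra.intCast_def, MonoidAlgebra.of_apply, MonoidAlgebra.single_mul_single,
      one_mul, mul_one]
    rfl
  have h2 : (MonoidAlgebra.single (phi n g) c : ZD n) = (c : ZD n) * of ℤ (DihedralGroup n) (phi n g) := by
    rw [MonoidAlgebra.intCast_def, MonoidAlgebra.of_apply, MonoidAlgebra.single_mul_single,
      one_mul, mul_one]
    rfl
  rw [h1, map_mul, map_intCast, f2_of f2 hf2x hf2y, h2]

lemma f2_eq [NeZero n] (z : QR n) : f2 z = MonoidAlgebra.mapDomain (phi n) z := by
  induction z using MonoidAlgebra.induction with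
  | zero => rw [MonoidAlgebra.mapDomain_zero]; exact map_zero f2
  | single_add g c f hg hc ih =>
    rw [MonoidAlgebra.mapDomain_add, map_add, ih, f2_single f2 hf2x hf2y, MonoidAlgebra.mapDomain_single]

end F2

lemma phi_sig {n : ℕ} [NeZero n] (d : DihedralGroup n) : phi n (sig n d) = d := by
  haveI : NeZero (2 * n) := ⟨by have := NeZero.ne n; omega⟩
  have hlt : ∀ j : ZMod n, j.val < 2 * n := fun j =>
    lt_of_lt_of_le (ZMod.val_lt j) (by omega)
  cases d with
  | r j =>
    show DihedralGroup.r (((j.val : ZMod (2 * n)).val : ZMod n)) = _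
    rw [ZMod.val_natCast_of_lt (hlt j), ZMod.natCast_val, ZMod.cast_id]
  | sr j =>
    show DihedralGroup.sr (((j.val : ZMod (2 * n)).val : ZMod n)) = _
    rw [ZMod.val_natCast_of_lt (hlt j), ZMod.natCast_val, ZMod.cast_id]

lemma mul_of_expand {n : ℕ} (g : QuaternionGroup n) :
    (Xq n ^ n + 1) * of ℤ (QuaternionGroup n) g
      = of ℤ (QuaternionGroup n) (QuaternionGroup.a (n : ZMod (2 * n)) * g)
        + of ℤ (QuaternionGroup n) g := by
  rw [Xq_pow, add_mul, one_mul, ← map_mul]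

lemma dagger {n : ℕ} [NeZero n] (g : QuaternionGroup n) :
    (Xq n ^ n + 1) * of ℤ (QuaternionGroup n) (sig n (phi n g)) =
    (Xq n ^ n + 1) * of ℤ (QuaternionGroup n) g := by
  haveI : NeZero (2 * n) := ⟨by have := NeZero.ne n; omega⟩
  cases g with
  | a i =>
    show (Xq n ^ n + 1) *
        of ℤ _ (QuaternionGroup.a (((i.val : ZMod n).val : ℕ) : ZMod (2 * n))) = _
    rw [mul_of_expand, mul_of_expand, a_mul_a, a_mul_a, ZMod.val_natCast]
    set k := i.val with hk
    have hik : i = ((k : ℕ) : ZMod (2 * n)) := by rw [hk, ZMod.natCast_val, ZMod.cast_id]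
    have hklt : k < 2 * n := ZMod.val_lt i
    rcases lt_or_ge k n with h | h
    · rw [Nat.mod_eq_of_lt h, hik]
    · have hmod : k % n = k - n := by
        conv_lhs => rw [Nat.mod_eq_sub_mod h]
        exact Nat.mod_eq_of_lt (by omega)
      rw [hmod, hik, Nat.cast_sub h]
      have r1 : (n : ZMod (2 * n)) + (((k : ℕ) : ZMod (2 * n)) - (n : ZMod (2 * n)))
          = ((k : ℕ) : ZMod (2 * n)) := by ring
      have r2 : ((k : ℕ) : ZMod (2 * n)) - (n : ZMod (2 * n))
          = (n : ZMod (2 * n)) + ((k : ℕ) : ZMod (2 * n)) := by linear_combination -(hnn n)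
      rw [r1, r2, add_comm]
  | xa i =>
    show (Xq n ^ n + 1) *
        of ℤ _ (QuaternionGroup.xa (((i.val : ZMod n).val : ℕ) : ZMod (2 * n))) = _
    rw [mul_of_expand, mul_of_expand, a_mul_xa, a_mul_xa, ZMod.val_natCast]
    set k := i.val with hk
    have hik : i = ((k : ℕ) : ZMod (2 * n)) := by rw [hk, ZMod.natCast_val, ZMod.cast_id]
    have hklt : k < 2 * n := ZMod.val_lt i
    rcases lt_or_ge k n with h | h
    · rw [Nat.mod_eq_of_lt h, hik]
    · have hmod : k % n = k - n := by
        conv_lhs => rw [Nat.mod_eq_sub_mod h]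
        exact Nat.mod_eq_of_lt (by omega)
      rw [hmod, hik, Nat.cast_sub h]
      have r3 : ((k : ℕ) : ZMod (2 * n)) - (n : ZMod (2 * n)) - (n : ZMod (2 * n))
          = ((k : ℕ) : ZMod (2 * n)) := by linear_combination -(hnn n)
      rw [r3, add_comm]

lemma single_eq_of_mul {n : ℕ} (h : QuaternionGroup n) (c : ℤ) :
    (MonoidAlgebra.single h c : QR n) = of ℤ (QuaternionGroup n) h * (c : QR n) := by
  rw [MonoidAlgebra.intCast_def, MonoidAlgebra.of_apply, MonoidAlgebra.single_mul_single,
    mul_one, one_mul]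
  try rfl

/-- the set-theoretic section of `phi`, on algebras -/
noncomputable def secQ (n : ℕ) (z : ZD n) : QR n := MonoidAlgebra.mapDomain (sig n) z

lemma key {n : ℕ} [NeZero n] (z : QR n) :
    (Xq n ^ n + 1) * secQ n (MonoidAlgebra.mapDomain (phi n) z) =
    (Xq n ^ n + 1) * z := by
  unfold secQ
  induction z using MonoidAlgebra.induction with
  | zero => rw [MonoidAlgebra.mapDomain_zero, MonoidAlgebra.mapDomain_zero]
  | single_add g c f hg hc ih =>
    rw [MonoidAlgebra.mapDomain_add, MonoidAlgebra.mapDomain_add, MonoidAlgebra.mapDomain_single,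
      MonoidAlgebra.mapDomain_single, mul_add, mul_add, ih]
    congr 1
    rw [single_eq_of_mul, single_eq_of_mul, ← mul_assoc, ← mul_assoc, dagger]

section F2B
variable {n : ℕ} (f2 : QR n →+* ZD n)
  (hf2x : f2 (Xq n) = of ℤ (DihedralGroup n) (DihedralGroup.r 1))
  (hf2y : f2 (Yq n) = of ℤ (DihedralGroup n) (DihedralGroup.sr 0))
include hf2x hf2y

lemma f2_zero_ann [NeZero n] (q : QR n) (h : f2 q = 0) : (Xq n ^ n + 1) * q = 0 := by
  have hkey := key (n := n) q
  rw [← f2_eq f2 hf2x hf2y q, h] at hkey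
  rw [← hkey, secQ, MonoidAlgebra.mapDomain_zero, mul_zero]

lemma f2_section [NeZero n] (z : ZD n) : f2 (secQ n z) = z := by
  rw [secQ, f2_eq f2 hf2x hf2y]
  have hps : (phi n) ∘ (sig n) = id := funext fun d => phi_sig d
  ext : 1
  rw [MonoidAlgebra.mapDomain, MonoidAlgebra.mapDomain, MonoidAlgebra.coeff_ofCoeff,
    MonoidAlgebra.coeff_ofCoeff, ← Finsupp.mapDomain_comp, hps, Finsupp.mapDomain_id]

lemma f2_two [NeZero n] : f2 (Xq n ^ n + 1) = 2 := by
  rw [map_add, map_pow, hf2x, map_one, ← map_pow, r_one_pow, ZMod.natCast_self,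
    ← DihedralGroup.one_def, map_one]
  norm_num

end F2B

section G2
variable {n : ℕ} (g2 : ZD n →+* F2D n)
  (hg2 : ∀ d : DihedralGroup n, g2 (of ℤ (DihedralGroup n) d) = of (ZMod 2) (DihedralGroup n) d)
include hg2

lemma g2_single (d : DihedralGroup n) (c : ℤ) :
    g2 (MonoidAlgebra.single d c) = MonoidAlgebra.single d ((c : ZMod 2)) := by
  have h1 : (MonoidAlgebra.single d c : ZD n) = (c : ZD n) * of ℤ (DihedralGroup n) d := by
    rw [MonoidAlgebra.intCast_def, MonoidAlgebra.of_apply, MonoidAlgebra.single_mul_single,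
      one_mul, mul_one]
    rfl
  have h2 : (MonoidAlgebra.single d ((c : ZMod 2)) : F2D n)
      = (c : F2D n) * of (ZMod 2) (DihedralGroup n) d := by
    rw [MonoidAlgebra.intCast_def, MonoidAlgebra.of_apply, MonoidAlgebra.single_mul_single,
      one_mul, mul_one]
    try rfl
  rw [h1, map_mul, map_intCast, hg2, h2]

lemma g2_eq (z : ZD n) :
    g2 z = MonoidAlgebra.map (Int.castAddHom (ZMod 2)) z := by
  induction z using MonoidAlgebra.induction with
  | zero => rw [MonoidAlgebra.map_zero]; exact map_zero g2
  | single_add d c f hd hc ih =>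
    rw [MonoidAlgebra.map_add, map_add, ih, g2_single g2 hg2,
      MonoidAlgebra.map_single, Int.coe_castAddHom]

lemma g2_dvd (z : ZD n) (h : g2 z = 0) : ∃ e : ZD n, z = 2 * e := by
  rw [g2_eq g2 hg2] at h
  have hdvd : ∀ d : DihedralGroup n, (2 : ℤ) ∣ z.coeff d := by
    intro d
    have h2 : ((z.coeff d : ℤ) : ZMod 2) = 0 := by
      have hx := congrArg (fun t : F2D n => t.coeff d) h
      simp only [MonoidAlgebra.coeff_map, Finsupp.mapRange_apply, MonoidAlgebra.coeff_zero,
        Finsupp.zero_apply, Int.coe_castAddHom] at hx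
      exact hx
    exact (ZMod.intCast_zmod_eq_zero_iff_dvd _ 2).1 h2
  refine ⟨MonoidAlgebra.ofCoeff (Finsupp.mapRange (fun c => c / 2) (by norm_num) z.coeff), ?_⟩
  have h2e : (2 : ZD n) = ((2 : ℤ) : ZD n) := by norm_num
  refine MonoidAlgebra.ext (Finsupp.ext fun d => ?_)
  rw [h2e, ← zsmul_eq_mul, MonoidAlgebra.coeff_smul_apply, MonoidAlgebra.coeff_ofCoeff,
    Finsupp.mapRange_apply, smul_eq_mul,
    Int.mul_ediv_cancel' (hdvd d)]

end G2

lemma two_mul_eq_zero {n : ℕ} (e : ZD n) (h : (2 : ZD n) * e = 0) : e = 0 := by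
  have h2e : (2 : ZD n) = ((2 : ℤ) : ZD n) := by norm_num
  rw [h2e, ← zsmul_eq_mul] at h
  refine MonoidAlgebra.ext (Finsupp.ext fun d => ?_)
  have hx := congrArg (fun t : ZD n => t.coeff d) h
  simp only [MonoidAlgebra.coeff_smul_apply, smul_eq_mul, MonoidAlgebra.coeff_zero,
    Finsupp.zero_apply] at hx
  rw [MonoidAlgebra.coeff_zero, Finsupp.zero_apply]
  omega

lemma xn1_mem (n : ℕ) (a b : ℤ) (hn : Odd n) : Xq n ^ n + 1 ∈ Pideal n a b := by
  have hX1 : Xq n + 1 ∈ Pideal n a b := Ideal.subset_span (Set.mem_insert_of_mem _ rfl)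
  obtain ⟨c, hc⟩ := hn.add_dvd_pow_add_pow (Polynomial.X : Polynomial ℤ) 1
  have hcomm : (Polynomial.aeval (Xq n)) ((Polynomial.X : Polynomial ℤ) + 1) *
      (Polynomial.aeval (Xq n)) c
      = (Polynomial.aeval (Xq n)) c * (Polynomial.aeval (Xq n)) ((Polynomial.X : Polynomial ℤ) + 1) :=
    ((Commute.all ((Polynomial.X : Polynomial ℤ) + 1) c).map (Polynomial.aeval (Xq n))).eq
  have := congrArg (Polynomial.aeval (Xq n)) hc
  rw [map_add, map_mul, map_pow, one_pow, map_one, Polynomial.aeval_X, hcomm] at this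
  rw [map_add, Polynomial.aeval_X, map_one] at this
  rw [this]
  exact Ideal.mul_mem_left _ _ hX1

lemma span_decomp (n : ℕ) (a b : ℤ) {w : QR n}
    (hw : w ∈ Submodule.span (QR n)
      ((fun w => (Xq n ^ n + 1) * w) '' (Pideal n a b : Set (QR n)))) :
    ∃ q ∈ Pideal n a b, w = (Xq n ^ n + 1) * q := by
  induction hw using Submodule.span_induction with
  | mem x hx =>
    obtain ⟨q, hq, hqx⟩ := hx
    exact ⟨q, hq, hqx.symm⟩
  | zero => exact ⟨0, Submodule.zero_mem _, (mul_zero _).symm⟩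
  | add x y hx hy ihx ihy =>
    obtain ⟨q1, h1, rfl⟩ := ihx
    obtain ⟨q2, h2, rfl⟩ := ihy
    exact ⟨q1 + q2, Submodule.add_mem _ h1 h2, (mul_add _ _ _).symm⟩
  | smul r x hx ih =>
    obtain ⟨q, hq, rfl⟩ := ih
    refine ⟨r * q, Ideal.mul_mem_left _ _ hq, ?_⟩
    rw [smul_eq_mul, ← mul_assoc, ← Xqn1_comm, mul_assoc]

end Stmt9Aux

open Stmt9Aux

/-- `P` is isomorphic as a `ℤQ_{4n}`-module to the pullback
`{(c,d) ∈ P/⟨xⁿ+1⟩P ⊕ ℤD_{2n} : c̄ = d̄ in 𝔽₂D_{2n}}` associated to the Milnor square.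
Here `f2 : ℤQ_{4n} → ℤD_{2n}` is induced by the group surjection `Q_{4n} → D_{2n}`
(`x ↦ r 1`, `y ↦ sr 0`), `g2` is reduction of coefficients mod `2`, and the isomorphism
is expressed as an injective additive map `j`, equivariant for the `ℤQ_{4n}`-actions
(on the `ℤD_{2n}` factor, `r` acts through multiplication by `f2 r`), whose image is
exactly the pullback set. -/
theorem stmt9 (n : ℕ) (a b : ℤ) (hn : Odd n)
    (hco : Int.gcd (a ^ 2 + b ^ 2) (2 * n) = 1)
    (f2 : QR n →+* ZD n) (g2 : ZD n →+* F2D n)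
    (hf2x : f2 (Xq n) = of ℤ (DihedralGroup n) (DihedralGroup.r 1))
    (hf2y : f2 (Yq n) = of ℤ (DihedralGroup n) (DihedralGroup.sr 0))
    (hg2 : ∀ d : DihedralGroup n, g2 (of ℤ (DihedralGroup n) d) = of (ZMod 2) (DihedralGroup n) d) :
    ∃ j : (Pideal n a b : Type) →+ (Pideal n a b ⧸ xnP n a b) × ZD n,
      Function.Injective j ∧
      (∀ (r : QR n) (p : Pideal n a b),
        j (r • p) = (r • (j p).1, f2 r * (j p).2)) ∧
      Set.range j =
        {cd | ∃ p : Pideal n a b,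
          Submodule.Quotient.mk p = cd.1 ∧ g2 (f2 (p : QR n)) = g2 cd.2} := by
  haveI : NeZero n := ⟨by rcases hn with ⟨k, hk⟩; omega⟩
  classical
  -- memberships in P
  have hxnP : Xq n ^ n + 1 ∈ Pideal n a b := xn1_mem n a b hn
  have hgen : (a : QR n) + (b : QR n) * Yq n ∈ Pideal n a b :=
    Ideal.subset_span (Set.mem_insert _ _)
  -- f2 is surjective
  have hsurj : Function.Surjective f2 := fun z => ⟨secQ n z, f2_section f2 hf2x hf2y z⟩
  -- membership of 2 and u in the image ideal
  have h2mem : (2 : ZD n) ∈ Ideal.map f2 (Pideal n a b) := by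
    have := Ideal.mem_map_of_mem f2 hxnP
    rwa [f2_two f2 hf2x hf2y] at this
  set s : ZD n := of ℤ (DihedralGroup n) (DihedralGroup.sr 0) with hs
  set u : ZD n := (a : ZD n) + (b : ZD n) * s with hu
  have humem : u ∈ Ideal.map f2 (Pideal n a b) := by
    have := Ideal.mem_map_of_mem f2 hgen
    rwa [map_add, map_mul, map_intCast, map_intCast, hf2y] at this
  have hss : s * s = 1 := by
    rw [hs, ← map_mul, DihedralGroup.sr_mul_self, map_one]
  have hBs : ∀ c : ℤ, s * (c : ZD n) = (c : ZD n) * s := fun c =>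
    ((Int.cast_commute c s).symm).eq
  -- (a - b s) * u = a^2 - b^2
  have hws : ((a : ZD n) - (b : ZD n) * s) * u = ((a ^ 2 - b ^ 2 : ℤ) : ZD n) := by
    rw [hu, sub_mul, mul_add, mul_add]
    have p1 : (b : ZD n) * s * (a : ZD n) = (a : ZD n) * ((b : ZD n) * s) := by
      rw [mul_assoc, hBs a, ← mul_assoc, ← mul_assoc]
      congr 1
      rw [← Int.cast_mul, ← Int.cast_mul, mul_comm]
    have p2 : (b : ZD n) * s * ((b : ZD n) * s) = (b : ZD n) * (b : ZD n) := by
      rw [mul_assoc, ← mul_assoc s, hBs b, mul_assoc, hss, mul_one]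
    rw [p1, p2, add_comm ((a : ZD n) * (a : ZD n)), add_sub_add_left_eq_sub]
    push_cast
    rw [pow_two, pow_two]
  have hwmem : ((a ^ 2 - b ^ 2 : ℤ) : ZD n) ∈ Ideal.map f2 (Pideal n a b) := by
    rw [← hws]; exact Ideal.mul_mem_left _ _ humem
  push_cast at hwmem
  -- 1 is in the image ideal
  have hcop : IsCoprime (a ^ 2 - b ^ 2) (2 : ℤ) := by
    have hco' : IsCoprime (a ^ 2 + b ^ 2) ((2 * n : ℕ) : ℤ) := by
      rw [Int.isCoprime_iff_gcd_eq_one]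
      rw [← hco]
      push_cast
      try rfl
    have hcop2 : IsCoprime (a ^ 2 + b ^ 2) (2 : ℤ) :=
      IsCoprime.of_isCoprime_of_dvd_right hco' ⟨(n : ℤ), by push_cast; ring⟩
    have h3 := hcop2.add_mul_left_left (-(b ^ 2))
    have he : a ^ 2 + b ^ 2 + 2 * -b ^ 2 = a ^ 2 - b ^ 2 := by ring
    rwa [he] at h3
  obtain ⟨x, y, hxy⟩ := hcop
  have hone : (1 : ZD n) ∈ Ideal.map f2 (Pideal n a b) := by
    have hx : (x : ZD n) * ((a : ZD n) ^ 2 - (b : ZD n) ^ 2) ∈ Ideal.map f2 (Pideal n a b) :=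
      Ideal.mul_mem_left _ _ hwmem
    have hy : (y : ZD n) * 2 ∈ Ideal.map f2 (Pideal n a b) :=
      Ideal.mul_mem_left _ _ h2mem
    have hcast : (1 : ZD n) = (x : ZD n) * ((a : ZD n) ^ 2 - (b : ZD n) ^ 2) + (y : ZD n) * 2 := by
      have := congrArg (fun t : ℤ => (t : ZD n)) hxy
      push_cast at this
      exact this.symm
    rw [hcast]
    exact Ideal.add_mem _ hx hy
  obtain ⟨p1, hp1P, hp1⟩ := (Ideal.mem_map_iff_of_surjective f2 hsurj).1 hone
  -- the map j
  refine ⟨{ toFun := fun p => (Submodule.Quotient.mk p, f2 (p : QR n)),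
            map_zero' := by simp,
            map_add' := fun p q => by
              simp [Prod.ext_iff, Submodule.Quotient.mk_add] }, ?_, ?_, ?_⟩
  · -- injectivity
    rw [injective_iff_map_eq_zero]
    intro p hp
    simp only [AddMonoidHom.coe_mk, ZeroHom.coe_mk, Prod.mk_eq_zero] at hp
    obtain ⟨hp1', hp2'⟩ := hp
    have hmem : p ∈ xnP n a b := (Submodule.Quotient.mk_eq_zero _).1 hp1'
    have hval : (p : QR n) ∈ Submodule.span (QR n)
        ((fun w => (Xq n ^ n + 1) * w) '' (Pideal n a b : Set (QR n))) :=
      Submodule.mem_comap.mp hmem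
    obtain ⟨q, hqP, hq⟩ := span_decomp n a b hval
    have h2q : (2 : ZD n) * f2 q = 0 := by
      rw [← f2_two f2 hf2x hf2y, ← map_mul, ← hq]
      exact hp2'
    have hq0 : f2 q = 0 := two_mul_eq_zero _ h2q
    have hp0 : (p : QR n) = 0 := by rw [hq, f2_zero_ann f2 hf2x hf2y q hq0]
    exact Subtype.ext hp0
  · -- equivariance
    intro r p
    refine Prod.ext ?_ ?_
    · show Submodule.Quotient.mk (r • p) = r • Submodule.Quotient.mk p
      rw [Submodule.Quotient.mk_smul]
    · show f2 ((r • p : Pideal n a b) : QR n) = f2 r * f2 (p : QR n)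
      rw [Submodule.coe_smul, smul_eq_mul, map_mul]
  · -- range
    ext cd
    constructor
    · rintro ⟨p, rfl⟩
      exact ⟨p, rfl, rfl⟩
    · rintro ⟨p₀, hc, hd⟩
      have hz : g2 (cd.2 - f2 (p₀ : QR n)) = 0 := by rw [map_sub, hd, sub_self]
      obtain ⟨e, he⟩ := g2_dvd g2 hg2 _ hz
      set q : QR n := secQ n e * p1 with hqdef
      have hqP : q ∈ Pideal n a b := Ideal.mul_mem_left _ _ hp1P
      have hfq : f2 q = e := by
        rw [hqdef, map_mul, hp1, mul_one, f2_section f2 hf2x hf2y]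
      set w : QR n := (Xq n ^ n + 1) * q with hwdef
      have hwP : w ∈ Pideal n a b := Ideal.mul_mem_left _ _ hqP
      refine ⟨p₀ + ⟨w, hwP⟩, ?_⟩
      have hmk : Submodule.Quotient.mk (⟨w, hwP⟩ : Pideal n a b)
          = (0 : Pideal n a b ⧸ xnP n a b) := by
        rw [Submodule.Quotient.mk_eq_zero]
        exact Submodule.mem_comap.mpr (Submodule.subset_span ⟨q, hqP, rfl⟩)
      have hfw : f2 w = 2 * e := by
        rw [hwdef, map_mul, f2_two f2 hf2x hf2y, hfq]
      refine Prod.ext ?_ ?_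
      · show Submodule.Quotient.mk (p₀ + (⟨w, hwP⟩ : Pideal n a b)) = cd.1
        rw [Submodule.Quotient.mk_add, hmk, add_zero, hc]
      · show f2 (((p₀ + (⟨w, hwP⟩ : Pideal n a b)) : Pideal n a b) : QR n) = cd.2
        rw [Submodule.coe_add, map_add, hfw, ← he, add_sub_cancel]
end

section
/- Let P be the left ideal ⟨-3+4y, x+1⟩ of ZQ₂₈. Then ZQ₂₈ ⊕ P is a free ZQ₂₈-module of rank 2; that is, P is stably free. -/
open MonoidAlgebra

/-- the left ideal `⟨-3+4y, x+1⟩` of `ℤQ₂₈` -/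
noncomputable def P28 : Ideal (QR 7) :=
  Ideal.span {(-3 : QR 7) + (4 : QR 7) * Yq 7, Xq 7 + 1}

open QuaternionGroup

noncomputable def ax (i : ℕ) : QR 7 := of ℤ (QuaternionGroup 7) (QuaternionGroup.a (i : ZMod 14))
noncomputable def bx (i : ℕ) : QR 7 := of ℤ (QuaternionGroup 7) (QuaternionGroup.xa (i : ZMod 14))

lemma ax_zero : ax 0 = 1 := by
  have : ((0:ℕ) : ZMod 14) = 0 := by decide
  rw [ax, this, ← QuaternionGroup.one_def, map_one]

lemma axa (i j : ℕ) : ax i * ax j = ax (i + j) := by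
  rw [ax, ax, ax, ← map_mul, a_mul_a]; push_cast; ring_nf

lemma axb (i j : ℕ) (h : i ≤ 14) : ax i * bx j = bx (14 + j - i) := by
  rw [ax, bx, bx, ← map_mul, a_mul_xa]
  congr 1
  have h2 : i ≤ 14 + j := le_trans h (by omega)
  congr 1
  push_cast [Nat.cast_sub h2]
  have : ((14 : ℕ) : ZMod 14) = 0 := by decide
  push_cast at this ⊢
  rw [this]; ring

lemma bxa (i j : ℕ) : bx i * ax j = bx (i + j) := by
  rw [ax, bx, bx, ← map_mul, xa_mul_a]; push_cast; ring_nf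

lemma bxb (i j : ℕ) (h : i ≤ 21) : bx i * bx j = ax (21 + j - i) := by
  rw [ax, bx, bx, ← map_mul, xa_mul_xa]
  congr 1
  have h2 : i ≤ 21 + j := le_trans h (by omega)
  congr 1
  push_cast [Nat.cast_sub h2]
  have : ((14 : ℕ) : ZMod 14) = 0 := by decide
  push_cast at this ⊢
  rw [show (21 : ZMod 14) = ((7:ℕ):ZMod 14) from by decide]
  norm_num

lemma ax_red (i : ℕ) (h : 14 ≤ i) : ax i = ax (i - 14) := by
  rw [ax, ax]
  congr 2
  push_cast [Nat.cast_sub h]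
  have : ((14 : ℕ) : ZMod 14) = 0 := by push_cast; decide
  push_cast at this
  rw [this]; ring

lemma bx_red (i : ℕ) (h : 14 ≤ i) : bx i = bx (i - 14) := by
  rw [bx, bx]
  congr 2
  push_cast [Nat.cast_sub h]
  have : ((14 : ℕ) : ZMod 14) = 0 := by push_cast; decide
  push_cast at this
  rw [this]; ring

instance : NoZeroSMulDivisors ℤ (QR 7) :=
  have := Module.isTorsionFree_int_iff_isAddTorsionFree.mp (inferInstance : Module.IsTorsionFree ℤ (QR 7)); IsAddTorsionFree.to_noZeroSMulDivisors_int

noncomputable def F11 : QR 7 := (-6 : ℤ) • ax 0 + (-1 : ℤ) • ax 1 + (2 : ℤ) • ax 2 + (-1 : ℤ) • ax 3 + (1 : ℤ) • ax 4 + (-1 : ℤ) • ax 5 + (1 : ℤ) • ax 6 + (7 : ℤ) • ax 7 + (1 : ℤ) • ax 8 + (-1 : ℤ) • ax 9 + (1 : ℤ) • ax 10 + (-1 : ℤ) • ax 11 + (1 : ℤ) • ax 12 + (-1 : ℤ) • ax 13 + (1 : ℤ) • bx 0 + (-2 : ℤ) • bx 1 + (3 : ℤ) • bx 2 + (-2 :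 ℤ) • bx 3 + (2 : ℤ) • bx 4 + (5 : ℤ) • bx 5 + (-5 : ℤ) • bx 6 + (-1 : ℤ) • bx 7 + (2 : ℤ) • bx 8 + (-3 : ℤ) • bx 9 + (2 : ℤ) • bx 10 + (-2 : ℤ) • bx 11 + (-5 : ℤ) • bx 12 + (5 : ℤ) • bx 13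

noncomputable def F12 : QR 7 := (8 : ℤ) • ax 0 + (1 : ℤ) • ax 3 + (-1 : ℤ) • ax 4 + (7 : ℤ) • ax 5 + (-7 : ℤ) • ax 7 + (-1 : ℤ) • ax 10 + (1 : ℤ) • ax 11 + (-7 : ℤ) • ax 12 + (1 : ℤ) • bx 0 + (-1 : ℤ) • bx 3 + (-1 : ℤ) • bx 7 + (-1 : ℤ) • bx 11

noncomputable def F21 : QR 7 := (-12 : ℤ) • ax 0 + (-14 : ℤ) • ax 1 + (21 : ℤ) • ax 2 + (-14 : ℤ) • ax 3 + (14 : ℤ) • ax 4 + (25 : ℤ) • ax 5 + (-25 : ℤ) • ax 6 + (13 : ℤ) • ax 7 + (14 : ℤ) • ax 8 + (-21 : ℤ) • ax 9 + (14 : ℤ) • ax 10 + (-14 : ℤ) • ax 11 + (-25 : ℤ) • ax 12 + (25 : ℤ) • ax 13 + (39 : ℤ) • bx 0 + (20 : ℤ) • bx 5 + (-19 : ℤ) • bx 6 + (-39 : ℤ) • bx 7 + (-19 : ℤ) • bx 12 + (20 : ℤ) • bx 13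

noncomputable def F22 : QR 7 := (25 : ℤ) • ax 0 + (1 : ℤ) • ax 1 + (-1 : ℤ) • ax 2 + (1 : ℤ) • ax 3 + (-1 : ℤ) • ax 4 + (20 : ℤ) • ax 5 + (-1 : ℤ) • ax 6 + (-26 : ℤ) • ax 7 + (-1 : ℤ) • ax 8 + (1 : ℤ) • ax 9 + (-1 : ℤ) • ax 10 + (1 : ℤ) • ax 11 + (-21 : ℤ) • ax 12 + (1 : ℤ) • ax 13 + (-41 : ℤ) • bx 0 + (2 : ℤ) • bx 1 + (-2 : ℤ) • bx 2 + (-5 : ℤ) • bx 3 + (5 : ℤ) • bx 4 + (-37 : ℤ) • bx 5 + (-2 : ℤ) • bx 6 + (41 : ℤ) • bx 7 + (-2 : ℤ) • bx 8 + (2 : ℤ) • bx 9 + (5 : ℤ) • bx 10 + (-5 : ℤ) • bx 11 + (37 : ℤ) • bx 12 + (2 : ℤ) • bx 13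

noncomputable def S11 : QR 7 := (-100 : ℤ) • ax 0 + (-75 : ℤ) • ax 1 + (-575 : ℤ) • ax 2 + (-550 : ℤ) • ax 3 + (75 : ℤ) • ax 4 + (100 : ℤ) • ax 5 + (75 : ℤ) • ax 6 + (100 : ℤ) • ax 7 + (75 : ℤ) • ax 8 + (600 : ℤ) • ax 9 + (575 : ℤ) • ax 10 + (-75 : ℤ) • ax 11 + (-100 : ℤ) • ax 12 + (-75 : ℤ) • ax 13 + (25 : ℤ) • bx 0 + (-25 : ℤ) • bx 1 + (-150 : ℤ) • bx 2 + (-25 : ℤ) • bx 3 + (-950 : ℤ) • bx 4 + (-1000 : ℤ) • bx 5 + (25 : ℤ) • bx 6 + (-25 : ℤ) • bx 7 + (25 : ℤ) • bx 8 + (150 : ℤ) • bx 9 + (25 : ℤ) • bx 10 + (950 : ℤ) • bx 11 + (1000 : ℤ) • bx 12 + (-25 : ℤ) • bx 13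

noncomputable def S12 : QR 7 := (200 : ℤ) • ax 2 + (175 : ℤ) • ax 3 + (25 : ℤ) • ax 5 + (-25 : ℤ) • ax 7 + (-175 : ℤ) • ax 9 + (-175 : ℤ) • ax 10 + (25 : ℤ) • bx 2 + (-25 : ℤ) • bx 4 + (-25 : ℤ) • bx 7 + (-25 : ℤ) • bx 8 + (-25 : ℤ) • bx 9 + (-25 : ℤ) • bx 10 + (25 : ℤ) • bx 12 + (25 : ℤ) • bx 13

noncomputable def S21 : QR 7 := (-1127 : ℤ) • ax 0 + (-348 : ℤ) • ax 1 + (-127 : ℤ) • ax 2 + (-348 : ℤ) • ax 3 + (523 : ℤ) • ax 4 + (327 : ℤ) • ax 5 + (348 : ℤ) • ax 6 + (1102 : ℤ) • ax 7 + (348 : ℤ) • ax 8 + (152 : ℤ) • ax 9 + (348 : ℤ) • ax 10 + (-523 : ℤ) • ax 11 + (-302 : ℤ) • ax 12 + (-348 : ℤ) • ax 13 + (139 : ℤ) • bx 0 + (361 : ℤ) • bx 1 + (639 : ℤ) • bx 2 + (336 : ℤ) • bx 3 + (-361 : ℤ) • bx 4 + (-614 : ℤ) • bx 5 + (-336 :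 ℤ) • bx 6 + (-139 : ℤ) • bx 7 + (-336 : ℤ) • bx 8 + (-614 : ℤ) • bx 9 + (-361 : ℤ) • bx 10 + (336 : ℤ) • bx 11 + (639 : ℤ) • bx 12 + (361 : ℤ) • bx 13

noncomputable def S22 : QR 7 := (100 : ℤ) • ax 0 + (75 : ℤ) • ax 1 + (100 : ℤ) • ax 2 + (75 : ℤ) • ax 3 + (-100 : ℤ) • ax 4 + (-125 : ℤ) • ax 5 + (-75 : ℤ) • ax 6 + (-100 : ℤ) • ax 7 + (-75 : ℤ) • ax 8 + (-100 : ℤ) • ax 9 + (-75 : ℤ) • ax 10 + (75 : ℤ) • ax 11 + (100 : ℤ) • ax 12 + (75 : ℤ) • ax 13 + (150 : ℤ) • bx 0 + (25 : ℤ) • bx 1 + (50 : ℤ) • bx 3 + (-25 : ℤ) • bx 4 + (25 : ℤ) • bx 5 + (-25 : ℤ) • bx 6 + (-150 : ℤ) • bx 7 + (-25 : ℤ) • bx 8 + (-50 : ℤ) • bx 10 + (25 : ℤ) • bx 11 + (-25 : ℤ) • bx 12 + (25 : ℤ) • bx 13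

noncomputable def w00 : QR 7 := (-4 : ℤ) • ax 0 + (-3 : ℤ) • ax 1 + (-23 : ℤ) • ax 2 + (-22 : ℤ) • ax 3 + (3 : ℤ) • ax 4 + (4 : ℤ) • ax 5 + (3 : ℤ) • ax 6 + (4 : ℤ) • ax 7 + (3 : ℤ) • ax 8 + (24 : ℤ) • ax 9 + (23 : ℤ) • ax 10 + (-3 : ℤ) • ax 11 + (-4 : ℤ) • ax 12 + (-3 : ℤ) • ax 13 + (1 : ℤ) • bx 0 + (-1 : ℤ) • bx 1 + (-6 : ℤ) • bx 2 + (-1 : ℤ) • bx 3 + (-38 : ℤ) • bx 4 + (-40 : ℤ) • bx 5 + (1 : ℤ) • bx 6 + (-1 : ℤ) • bx 7 + (1 : ℤ) • bx 8 + (6 : ℤ) • bx 9 + (1 : ℤ) • bx 10 + (38 : ℤ) • bx 11 + (40 : ℤ) • bx 12 + (-1 : ℤ) • bx 13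

noncomputable def w01 : QR 7 := (8 : ℤ) • ax 2 + (7 : ℤ) • ax 3 + (1 : ℤ) • ax 5 + (-1 : ℤ) • ax 7 + (-7 : ℤ) • ax 9 + (-7 : ℤ) • ax 10 + (1 : ℤ) • bx 2 + (-1 : ℤ) • bx 4 + (-1 : ℤ) • bx 7 + (-1 : ℤ) • bx 8 + (-1 : ℤ) • bx 9 + (-1 : ℤ) • bx 10 + (1 : ℤ) • bx 12 + (1 : ℤ) • bx 13

noncomputable def w10 : QR 7 := (113 : ℤ) • ax 0 + (-12 : ℤ) • ax 1 + (-83 : ℤ) • ax 2 + (-16 : ℤ) • ax 3 + (-9 : ℤ) • ax 4 + (63 : ℤ) • ax 5 + (16 : ℤ) • ax 6 + (-110 : ℤ) • ax 7 + (16 : ℤ) • ax 8 + (84 : ℤ) • ax 9 + (12 : ℤ) • ax 10 + (5 : ℤ) • ax 11 + (-62 : ℤ) • ax 12 + (-12 : ℤ) • ax 13 + (-197 : ℤ) • bx 0 + (-99 : ℤ) • bx 1 + (-97 : ℤ) • bx 2 + (-96 : ℤ) • bx 3 + (127 : ℤ) • bx 4 + (126 : ℤ) • bx 5 + (96 : ℤ)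 • bx 6 + (193 : ℤ) • bx 7 + (96 : ℤ) • bx 8 + (98 : ℤ) • bx 9 + (99 : ℤ) • bx 10 + (-124 : ℤ) • bx 11 + (-125 : ℤ) • bx 12 + (-99 : ℤ) • bx 13

noncomputable def w11 : QR 7 := (-36 : ℤ) • ax 0 + (-13 : ℤ) • ax 1 + (-12 : ℤ) • ax 2 + (-17 : ℤ) • ax 3 + (16 : ℤ) • ax 4 + (11 : ℤ) • ax 5 + (13 : ℤ) • ax 6 + (36 : ℤ) • ax 7 + (13 : ℤ) • ax 8 + (12 : ℤ) • ax 9 + (17 : ℤ) • ax 10 + (-13 : ℤ) • ax 11 + (-8 : ℤ) • ax 12 + (-13 : ℤ) • ax 13 + (-2 : ℤ) • bx 0 + (9 : ℤ) • bx 1 + (16 : ℤ) • bx 2 + (6 : ℤ) • bx 3 + (-13 : ℤ) • bx 4 + (-23 : ℤ) • bx 5 + (-9 : ℤ) • bx 6 + (2 : ℤ) • bx 7 + (-9 : ℤ) • bx 8 + (-16 : ℤ) • bx 9 + (-6 : ℤ) • bx 10 + (9 : ℤ) • bx 11 + (19 : ℤ) • bx 12 + (9 : ℤ) • bx 13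

noncomputable def w20 : QR 7 := (-59 : ℤ) • ax 0 + (-59 : ℤ) • ax 1 + (-19 : ℤ) • ax 2 + (-19 : ℤ) • ax 3 + (7 : ℤ) • ax 4 + (34 : ℤ) • ax 5 + (27 : ℤ) • ax 6 + (58 : ℤ) • ax 7 + (58 : ℤ) • ax 8 + (20 : ℤ) • ax 9 + (20 : ℤ) • ax 10 + (-7 : ℤ) • ax 11 + (-33 : ℤ) • ax 12 + (-26 : ℤ) • ax 13 + (20 : ℤ) • bx 0 + (40 : ℤ) • bx 1 + (39 : ℤ) • bx 2 + (-1 : ℤ) • bx 3 + (-39 : ℤ) • bx 4 + (-38 : ℤ) • bx 5 + (-19 : ℤ) • bx 6 + (-19 : ℤ) • bx 7 + (-38 : ℤ) • bx 8 + (-39 : ℤ) • bx 9 + (-1 : ℤ) • bx 10 + (39 : ℤ) • bx 11 + (40 : ℤ) • bx 12 + (20 : ℤ) • bx 13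

noncomputable def w21 : QR 7 := (7 : ℤ) • ax 0 + (7 : ℤ) • ax 1 + (7 : ℤ) • ax 2 + (7 : ℤ) • ax 3 + (-1 : ℤ) • ax 4 + (-9 : ℤ) • ax 5 + (-8 : ℤ) • ax 6 + (-7 : ℤ) • ax 7 + (-7 : ℤ) • ax 8 + (-7 : ℤ) • ax 9 + (-7 : ℤ) • ax 10 + (7 : ℤ) • ax 12 + (7 : ℤ) • ax 13 + (7 : ℤ) • bx 0 + (1 : ℤ) • bx 1 + (2 : ℤ) • bx 2 + (1 : ℤ) • bx 3 + (-7 : ℤ) • bx 6 + (-7 : ℤ) • bx 7 + (-1 : ℤ) • bx 8 + (-2 : ℤ) • bx 9 + (-1 : ℤ) • bx 10 + (7 : ℤ) • bx 13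

noncomputable def al1 : QR 7 := (-1 : ℤ) • ax 13 + (-1 : ℤ) • bx 0 + (-1 : ℤ) • bx 1

noncomputable def be1 : QR 7 := (8 : ℤ) • ax 0 + (-8 : ℤ) • ax 1 + (8 : ℤ) • ax 2 + (-7 : ℤ) • ax 3 + (6 : ℤ) • ax 4 + (1 : ℤ) • ax 5 + (3 : ℤ) • ax 6 + (-6 : ℤ) • ax 7 + (6 : ℤ) • ax 8 + (-6 : ℤ) • ax 9 + (5 : ℤ) • ax 10 + (-4 : ℤ) • ax 11 + (-3 : ℤ) • ax 12 + (-2 : ℤ) • bx 0 + (3 : ℤ) • bx 1 + (-3 : ℤ) • bx 2 + (2 : ℤ) • bx 3 + (-2 : ℤ) • bx 4 + (2 : ℤ) • bx 5 + (-2 : ℤ) • bx 6 + (1 : ℤ) • bx 7 + (-1 : ℤ) • bx 8 + (1 : ℤ) • bx 9 + (-1 : ℤ) • bx 10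

noncomputable def al2 : QR 7 := (0 : QR 7)

noncomputable def be2 : QR 7 := (25 : ℤ) • ax 0 + (-24 : ℤ) • ax 1 + (23 : ℤ) • ax 2 + (-22 : ℤ) • ax 3 + (21 : ℤ) • ax 4 + (-1 : ℤ) • ax 5 + (-26 : ℤ) • ax 7 + (25 : ℤ) • ax 8 + (-24 : ℤ) • ax 9 + (23 : ℤ) • ax 10 + (-22 : ℤ) • ax 11 + (1 : ℤ) • ax 12 + (-41 : ℤ) • bx 0 + (43 : ℤ) • bx 1 + (-45 : ℤ) • bx 2 + (40 : ℤ) • bx 3 + (-35 : ℤ) • bx 4 + (-2 : ℤ) • bx 5 + (41 : ℤ) • bx 7 + (-43 : ℤ) • bx 8 + (45 : ℤ) • bx 9 + (-40 : ℤ) • bx 10 + (35 : ℤ) • bx 11 + (2 : ℤ) • bx 12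

noncomputable def g1 : QR 7 := (-3 : ℤ) • ax 0 + (4 : ℤ) • bx 0

noncomputable def g2 : QR 7 := (1 : ℤ) • ax 0 + (1 : ℤ) • ax 1

set_option maxHeartbeats 4000000 in
lemma e1 : F11 * S11 + F12 * S21 = (25:ℤ) • ax 0 := by
  simp only [F11, S11, F12, S21, zero_mul, mul_zero, zero_add, add_zero, smul_zero, mul_add, add_mul, smul_mul_assoc, mul_smul_comm, smul_smul,
    axa, axb, bxa, bxb, ax_red, bx_red, Nat.reduceAdd, Nat.reduceSub, Int.reduceMul,
    Nat.reduceLeDiff]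
  abel

set_option maxHeartbeats 4000000 in
lemma e2 : F21 * S11 + F22 * S21 = 0 := by
  simp only [F21, S11, F22, S21, zero_mul, mul_zero, zero_add, add_zero, smul_zero, mul_add, add_mul, smul_mul_assoc, mul_smul_comm, smul_smul,
    axa, axb, bxa, bxb, ax_red, bx_red, Nat.reduceAdd, Nat.reduceSub, Int.reduceMul,
    Nat.reduceLeDiff]
  abel

set_option maxHeartbeats 4000000 in
lemma e3 : F11 * S12 + F12 * S22 = 0 := by
  simp only [F11, S12, F12, S22, zero_mul, mul_zero, zero_add, add_zero, smul_zero, mul_add, add_mul, smul_mul_assoc, mul_smul_comm, smul_smul,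
    axa, axb, bxa, bxb, ax_red, bx_red, Nat.reduceAdd, Nat.reduceSub, Int.reduceMul,
    Nat.reduceLeDiff]
  abel

set_option maxHeartbeats 4000000 in
lemma e4 : F21 * S12 + F22 * S22 = (25:ℤ) • ax 0 := by
  simp only [F21, S12, F22, S22, zero_mul, mul_zero, zero_add, add_zero, smul_zero, mul_add, add_mul, smul_mul_assoc, mul_smul_comm, smul_smul,
    axa, axb, bxa, bxb, ax_red, bx_red, Nat.reduceAdd, Nat.reduceSub, Int.reduceMul,
    Nat.reduceLeDiff]
  abel

set_option maxHeartbeats 4000000 in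
lemma e5 : w00 * F11 + w01 * F21 = ax 0 := by
  simp only [w00, F11, w01, F21, zero_mul, mul_zero, zero_add, add_zero, smul_zero, mul_add, add_mul, smul_mul_assoc, mul_smul_comm, smul_smul,
    axa, axb, bxa, bxb, ax_red, bx_red, Nat.reduceAdd, Nat.reduceSub, Int.reduceMul,
    Nat.reduceLeDiff]
  abel

set_option maxHeartbeats 4000000 in
lemma e6 : w00 * F12 + w01 * F22 = 0 := by
  simp only [w00, F12, w01, F22, zero_mul, mul_zero, zero_add, add_zero, smul_zero, mul_add, add_mul, smul_mul_assoc, mul_smul_comm, smul_smul,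
    axa, axb, bxa, bxb, ax_red, bx_red, Nat.reduceAdd, Nat.reduceSub, Int.reduceMul,
    Nat.reduceLeDiff]
  abel

set_option maxHeartbeats 4000000 in
lemma e7 : w10 * F11 + w11 * F21 = 0 := by
  simp only [w10, F11, w11, F21, zero_mul, mul_zero, zero_add, add_zero, smul_zero, mul_add, add_mul, smul_mul_assoc, mul_smul_comm, smul_smul,
    axa, axb, bxa, bxb, ax_red, bx_red, Nat.reduceAdd, Nat.reduceSub, Int.reduceMul,
    Nat.reduceLeDiff]
  abel

set_option maxHeartbeats 4000000 in
lemma e8 : w10 * F12 + w11 * F22 = g1 := by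
  simp only [w10, F12, w11, F22, g1, zero_mul, mul_zero, zero_add, add_zero, smul_zero, mul_add, add_mul, smul_mul_assoc, mul_smul_comm, smul_smul,
    axa, axb, bxa, bxb, ax_red, bx_red, Nat.reduceAdd, Nat.reduceSub, Int.reduceMul,
    Nat.reduceLeDiff]
  abel

set_option maxHeartbeats 4000000 in
lemma e9 : w20 * F11 + w21 * F21 = 0 := by
  simp only [w20, F11, w21, F21, zero_mul, mul_zero, zero_add, add_zero, smul_zero, mul_add, add_mul, smul_mul_assoc, mul_smul_comm, smul_smul,
    axa, axb, bxa, bxb, ax_red, bx_red, Nat.reduceAdd, Nat.reduceSub, Int.reduceMul,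
    Nat.reduceLeDiff]
  abel

set_option maxHeartbeats 4000000 in
lemma e10 : w20 * F12 + w21 * F22 = g2 := by
  simp only [w20, F12, w21, F22, g2, zero_mul, mul_zero, zero_add, add_zero, smul_zero, mul_add, add_mul, smul_mul_assoc, mul_smul_comm, smul_smul,
    axa, axb, bxa, bxb, ax_red, bx_red, Nat.reduceAdd, Nat.reduceSub, Int.reduceMul,
    Nat.reduceLeDiff]
  abel

set_option maxHeartbeats 4000000 in
lemma e11 : al1 * g1 + be1 * g2 = F12 := by
  simp only [al1, g1, be1, g2, F12, zero_mul, mul_zero, zero_add, add_zero, smul_zero, mul_add, add_mul, smul_mul_assoc, mul_smul_comm, smul_smul,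
    axa, axb, bxa, bxb, ax_red, bx_red, Nat.reduceAdd, Nat.reduceSub, Int.reduceMul,
    Nat.reduceLeDiff]
  abel

set_option maxHeartbeats 4000000 in
lemma e12 : al2 * g1 + be2 * g2 = F22 := by
  simp only [al2, g1, be2, g2, F22, zero_mul, mul_zero, zero_add, add_zero, smul_zero, mul_add, add_mul, smul_mul_assoc, mul_smul_comm, smul_smul,
    axa, axb, bxa, bxb, ax_red, bx_red, Nat.reduceAdd, Nat.reduceSub, Int.reduceMul,
    Nat.reduceLeDiff]
  abel

lemma hg1 : (-3 : QR 7) + (4 : QR 7) * Yq 7 = g1 := by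
  have hb : Yq 7 = bx 0 := by rw [Yq, bx]; norm_num
  have h4 : (4 : QR 7) = ((4:ℤ) : QR 7) := by norm_cast
  have h3 : (-3 : QR 7) = ((-3:ℤ) : QR 7) := by norm_cast
  rw [g1, ax_zero, hb, h4, h3, zsmul_eq_mul, zsmul_eq_mul, mul_one]

lemma hg2 : Xq 7 + 1 = g2 := by
  have hb : Xq 7 = ax 1 := by rw [Xq, ax]; norm_num
  rw [g2, ax_zero, hb, one_smul, one_smul, add_comm]

lemma mem_g1 : g1 ∈ P28 := by
  rw [← hg1]
  exact Ideal.subset_span (Set.mem_insert _ _)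

lemma mem_g2 : g2 ∈ P28 := by
  rw [← hg2]
  exact Ideal.subset_span (Set.mem_insert_of_mem _ rfl)

lemma memF12 : F12 ∈ P28 := by
  rw [← e11]
  exact add_mem (by simpa [smul_eq_mul] using P28.smul_mem al1 mem_g1)
    (by simpa [smul_eq_mul] using P28.smul_mem be1 mem_g2)

lemma memF22 : F22 ∈ P28 := by
  rw [← e12]
  exact add_mem (by simpa [smul_eq_mul] using P28.smul_mem al2 mem_g1)
    (by simpa [smul_eq_mul] using P28.smul_mem be2 mem_g2)

noncomputable def fmap : (Fin 2 → QR 7) →ₗ[QR 7] (QR 7 × P28) where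
  toFun v := ⟨v 0 * F11 + v 1 * F21,
    ⟨v 0 * F12 + v 1 * F22, add_mem
      (by simpa [smul_eq_mul] using P28.smul_mem (v 0) memF12)
      (by simpa [smul_eq_mul] using P28.smul_mem (v 1) memF22)⟩⟩
  map_add' u v := by
    refine Prod.ext ?_ (Subtype.ext ?_) <;>
      simp only [Pi.add_apply, add_mul, Prod.fst_add, Prod.snd_add, Submodule.coe_add] <;> abel
  map_smul' c v := by
    refine Prod.ext ?_ (Subtype.ext ?_) <;>
      simp [Pi.smul_apply, smul_eq_mul, mul_add, mul_assoc]

lemma fmap_ker : ∀ w, fmap w = 0 → w = 0 := by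
  intro w hw
  have h1 : w 0 * F11 + w 1 * F21 = 0 := congrArg Prod.fst hw
  have h2 : w 0 * F12 + w 1 * F22 = 0 := congrArg (fun p => ((p.2 : P28) : QR 7)) hw
  have k0 : w 0 = 0 := by
    have expand : (w 0 * F11 + w 1 * F21) * S11 + (w 0 * F12 + w 1 * F22) * S21
        = w 0 * (F11 * S11 + F12 * S21) + w 1 * (F21 * S11 + F22 * S21) := by noncomm_ring
    rw [h1, h2, zero_mul, zero_mul, add_zero, e1, e2, mul_zero, add_zero,
      mul_smul_comm, ax_zero, mul_one] at expand
    have := smul_eq_zero.mp expand.symm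
    simpa using this
  have k1 : w 1 = 0 := by
    have expand : (w 0 * F11 + w 1 * F21) * S12 + (w 0 * F12 + w 1 * F22) * S22
        = w 0 * (F11 * S12 + F12 * S22) + w 1 * (F21 * S12 + F22 * S22) := by noncomm_ring
    rw [h1, h2, zero_mul, zero_mul, add_zero, e3, e4, mul_zero, zero_add,
      mul_smul_comm, ax_zero, mul_one] at expand
    have := smul_eq_zero.mp expand.symm
    simpa using this
  funext i
  fin_cases i
  · simpa using k0
  · simpa using k1

lemma fmap_inj : Function.Injective fmap := by
  intro a b hab
  have h := fmap_ker (a - b) (by rw [map_sub, hab, sub_self])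
  exact sub_eq_zero.mp h

lemma fmap_surj : Function.Surjective fmap := by
  rintro ⟨aa, p, hp⟩
  obtain ⟨c, d, hcd⟩ := Submodule.mem_span_pair.mp hp
  refine ⟨![aa * w00 + c * w10 + d * w20, aa * w01 + c * w11 + d * w21], ?_⟩
  have hv0 : (![aa * w00 + c * w10 + d * w20, aa * w01 + c * w11 + d * w21] : Fin 2 → QR 7) 0
      = aa * w00 + c * w10 + d * w20 := rfl
  have hv1 : (![aa * w00 + c * w10 + d * w20, aa * w01 + c * w11 + d * w21] : Fin 2 → QR 7) 1
      = aa * w01 + c * w11 + d * w21 := rfl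
  refine Prod.ext ?_ (Subtype.ext ?_)
  · show (aa * w00 + c * w10 + d * w20) * F11 + (aa * w01 + c * w11 + d * w21) * F21 = aa
    have expand : (aa * w00 + c * w10 + d * w20) * F11 + (aa * w01 + c * w11 + d * w21) * F21
        = aa * (w00 * F11 + w01 * F21) + c * (w10 * F11 + w11 * F21)
          + d * (w20 * F11 + w21 * F21) := by noncomm_ring
    rw [expand, e5, e7, e9, mul_zero, mul_zero, ax_zero, mul_one, add_zero, add_zero]
  · show (aa * w00 + c * w10 + d * w20) * F12 + (aa * w01 + c * w11 + d * w21) * F22 = p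
    have expand : (aa * w00 + c * w10 + d * w20) * F12 + (aa * w01 + c * w11 + d * w21) * F22
        = aa * (w00 * F12 + w01 * F22) + c * (w10 * F12 + w11 * F22)
          + d * (w20 * F12 + w21 * F22) := by noncomm_ring
    rw [expand, e6, e8, e10, mul_zero, zero_add, ← hg1, ← hg2]
    rw [smul_eq_mul, smul_eq_mul] at hcd
    exact hcd

theorem stmt13 :
    Nonempty ((QR 7 × P28) ≃ₗ[QR 7] (Fin 2 → QR 7)) := by
  exact ⟨(LinearEquiv.ofBijective fmap ⟨fmap_inj, fmap_surj⟩).symm⟩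
end

section
/- Let M and M' be modules over a group ring ZG (G finite) with M' ⊕ ZG^k ≅ M ⊕ ZG^k, and let 0 → M → C₂ → C₁ → C₀ → Z → 0 be an exact sequence of ZG-modules with the C_i finitely generated stably free. Then there exists an exact sequence 0 → M' → Q₂ → C₁ → C₀ → Z → 0 with Q₂ finitely generated stably free. -/
open MonoidAlgebra

/-- the integral group ring of `G` -/
abbrev GA (G : Type) [Group G] : Type := MonoidAlgebra ℤ G

/-- the augmentation map -/
noncomputable def augG (G : Type) [Group G] : GA G →+* ℤ :=
  ((MonoidAlgebra.lift ℤ ℤ G) 1).toRingHom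

/-- a module is stably free if adding a finite free module makes it finite free -/
def StablyFree (A : Type) [Ring A] (M : Type) [AddCommGroup M] [Module A M] : Prop :=
  ∃ i j : ℕ, Nonempty ((M × (Fin i → A)) ≃ₗ[A] (Fin j → A))

section SwanAux

variable {G : Type} [Group G] [Fintype G]

/-- `ℤG` is ℤ-linearly just `G → ℤ`. -/
noncomputable def gaEquiv : GA G ≃ₗ[ℤ] (G → ℤ) :=
  (MonoidAlgebra.coeffLinearEquiv ℤ) ≪≫ₗ (Finsupp.linearEquivFunOnFinite ℤ ℤ G)

variable {N : Type} [AddCommGroup N] [Module (GA G) N]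

/-- Swan averaging: turn an additive map `N →+ ℤG` into a `ℤG`-linear one. -/
noncomputable def avg (t : N →+ GA G) : N → GA G :=
  fun n => ∑ g : G, MonoidAlgebra.single g
    ((t ((MonoidAlgebra.single g⁻¹ (1:ℤ) : GA G) • n)).coeff 1)

lemma avg_add (t : N →+ GA G) (n m : N) : avg t (n + m) = avg t n + avg t m := by
  unfold avg
  rw [← Finset.sum_add_distrib]
  refine Finset.sum_congr rfl (fun g _ => ?_)
  rw [smul_add, map_add, MonoidAlgebra.coeff_add, Finsupp.add_apply, MonoidAlgebra.single_add]

lemma avg_zsmul (t : N →+ GA G) (c : ℤ) (n : N) : avg t (c • n) = c • avg t n := by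
  unfold avg
  rw [Finset.smul_sum]
  refine Finset.sum_congr rfl (fun g _ => ?_)
  rw [smul_comm, map_zsmul, MonoidAlgebra.coeff_smul, Finsupp.smul_apply, MonoidAlgebra.smul_single]

lemma avg_single_smul (t : N →+ GA G) (h : G) (n : N) :
    avg t ((MonoidAlgebra.single h (1:ℤ) : GA G) • n)
      = (MonoidAlgebra.single h (1:ℤ) : GA G) * avg t n := by
  unfold avg
  rw [Finset.mul_sum]
  refine (Fintype.sum_equiv (Equiv.mulLeft h) _ _ (fun g => ?_)).symm
  simp [smul_smul, MonoidAlgebra.single_mul_single, mul_assoc]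

lemma avg_smul (t : N →+ GA G) (r : GA G) (n : N) : avg t (r • n) = r * avg t n := by
  induction r using MonoidAlgebra.induction_on with
  | of g => simpa [MonoidAlgebra.of_apply] using avg_single_smul t g n
  | add f g hf hg => rw [add_smul, add_mul, ← hf, ← hg, avg_add]
  | smul c f hf => rw [smul_assoc, avg_zsmul, hf, smul_mul_assoc]

/-- the `ℤG`-linear version of `avg` -/
noncomputable def avgL (t : N →+ GA G) : N →ₗ[GA G] GA G where
  toFun := avg t
  map_add' := avg_add t
  map_smul' := fun r n => avg_smul t r n

lemma avgL_comp {N' : Type} [AddCommGroup N'] [Module (GA G) N']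
    (t : N →+ GA G) (u : N' →ₗ[GA G] N) (n : N') :
    avgL t (u n) = avgL (t.comp u.toAddMonoidHom) n := by
  show avg t (u n) = avg _ n
  unfold avg
  refine Finset.sum_congr rfl (fun g _ => ?_)
  rw [← map_smul]
  rfl

lemma avgL_of_linear (l : N →ₗ[GA G] GA G) (n : N) :
    avgL l.toAddMonoidHom n = l n := by
  show avg _ n = l n
  unfold avg
  have h : ∀ g : G, (l ((MonoidAlgebra.single g⁻¹ (1:ℤ) : GA G) • n)).coeff 1 = (l n).coeff g := by
    intro g
    rw [map_smul, smul_eq_mul, MonoidAlgebra.single_mul_apply]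
    simp
  simp only [LinearMap.toAddMonoidHom_coe, h]
  apply MonoidAlgebra.coeff_injective
  rw [MonoidAlgebra.coeff_sum]
  simp only [MonoidAlgebra.coeff_single]
  exact Finsupp.univ_sum_single _

/-- A `ℤG`-split-like statement: an injective `ℤG`-map whose cokernel embeds in a
ℤ-torsion-free module admits an additive retraction (the cokernel is f.g. free over `ℤ`). -/
lemma exists_add_retraction
    {A B T : Type} [AddCommGroup A] [Module (GA G) A] [AddCommGroup B] [Module (GA G) B]
    [AddCommGroup T] [Module (GA G) T] [Module.Finite (GA G) B]
    (j : A →ₗ[GA G] B) (hj : Function.Injective j)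
    (f : B →ₗ[GA G] T) (hker : LinearMap.ker f = LinearMap.range j)
    (htf : ∀ (c : ℤ) (t : T), c • t = 0 → c = 0 ∨ t = 0) :
    ∃ s : B →+ A, ∀ a, s (j a) = a := by
  classical
  set K := LinearMap.range j with hK
  let Q := B ⧸ K
  let π : B →ₗ[GA G] Q := K.mkQ
  have hKf : K ≤ LinearMap.ker f := le_of_eq hker.symm
  let ind : Q →ₗ[GA G] T := K.liftQ f hKf
  have hindinj : Function.Injective ind := by
    rw [← LinearMap.ker_eq_bot, Submodule.ker_liftQ_eq_bot _ _ _ (le_of_eq hker)]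
  have : Module.Finite (GA G) Q := Module.Finite.quotient _ _
  have hfinZ : Module.Finite ℤ (GA G) := Module.Finite.equiv (gaEquiv (G := G)).symm
  have : Module.Finite ℤ Q := Module.Finite.trans (GA G) Q
  have : NoZeroSMulDivisors ℤ Q := by
    refine ⟨fun {c x} h => ?_⟩
    have : c • ind x = 0 := by rw [← map_zsmul ind c x, h, map_zero]
    rcases htf c (ind x) this with h' | h'
    · exact Or.inl h'
    · exact Or.inr (hindinj (by rw [h', map_zero]))
  have hfree : Module.Free ℤ Q := Module.free_of_finite_type_torsion_free'
  have hsurj : Function.Surjective (π.toAddMonoidHom.toIntLinearMap) :=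
    Submodule.mkQ_surjective K
  obtain ⟨σ, hσ⟩ := Module.projective_lifting_property
    (π.toAddMonoidHom.toIntLinearMap) (LinearMap.id) hsurj
  have hσ' : ∀ x : Q, π (σ x) = x := by
    intro x
    have := congrArg (fun t => t x) hσ
    simpa using this
  let je : A ≃ₗ[GA G] K := LinearEquiv.ofInjective j hj
  have hmem : ∀ b : B, b - σ (π b) ∈ K := by
    intro b
    have h2 : π (b - σ (π b)) = 0 := by simp [map_sub, hσ']
    have h3 : Submodule.Quotient.mk (p := K) (b - σ (π b)) = 0 := h2
    exact (Submodule.Quotient.mk_eq_zero K).mp h3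
  let sK : B → K := fun b => ⟨b - σ (π b), hmem b⟩
  have sK_add : ∀ x y : B, sK (x + y) = sK x + sK y := by
    intro x y
    apply Subtype.ext
    show x + y - σ (π (x + y)) = (x - σ (π x)) + (y - σ (π y))
    rw [map_add, map_add]
    abel
  have sK_j : ∀ a : A, sK (j a) = ⟨j a, (hK ▸ LinearMap.mem_range_self j a : j a ∈ K)⟩ := by
    intro a
    apply Subtype.ext
    show j a - σ (π (j a)) = j a
    have h0 : π (j a) = 0 :=
      (Submodule.Quotient.mk_eq_zero K).mpr (LinearMap.mem_range_self j a)
    rw [h0, map_zero, sub_zero]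
  refine ⟨{ toFun := fun b => je.symm (sK b)
            map_zero' := by
              have h : sK 0 = 0 := by apply Subtype.ext; show (0:B) - σ (π 0) = 0; simp
              show je.symm (sK 0) = 0
              rw [h, map_zero]
            map_add' := by
              intro x y
              show je.symm (sK (x + y)) = je.symm (sK x) + je.symm (sK y)
              rw [sK_add, map_add] }, ?_⟩
  intro a
  show je.symm (sK (j a)) = a
  rw [sK_j a]
  exact (LinearEquiv.symm_apply_eq je).mpr rfl

/-- concatenation of two finite free modules -/
noncomputable def finProd (a b : ℕ) :
    ((Fin a → GA G) × (Fin b → GA G)) ≃ₗ[GA G] (Fin (a + b) → GA G) :=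
  (LinearEquiv.sumArrowLequivProdArrow (Fin a) (Fin b) (GA G) (GA G)).symm ≪≫ₗ
    (LinearEquiv.funCongrLeft (GA G) (GA G) finSumFinEquiv.symm)

end SwanAux

/-- Swan's cancellation construction: if `M' ⊕ ℤG^k ≅ M ⊕ ℤG^k` and
`0 → M → C₂ → C₁ → C₀ → ℤ → 0` is exact with the `Cᵢ` finitely generated stably free
`ℤG`-modules (`ℤ` carrying the `ℤG`-action through the augmentation), then there is an
exact sequence `0 → M' → Q₂ → C₁ → C₀ → ℤ → 0` with `Q₂` finitely generated stably free. -/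
theorem stmt19 (G : Type) [Group G] [Fintype G]
    (M M' C₂ C₁ C₀ : Type)
    [AddCommGroup M] [Module (GA G) M] [AddCommGroup M'] [Module (GA G) M']
    [AddCommGroup C₂] [Module (GA G) C₂] [AddCommGroup C₁] [Module (GA G) C₁]
    [AddCommGroup C₀] [Module (GA G) C₀]
    (k : ℕ)
    (hstab : Nonempty ((M' × (Fin k → GA G)) ≃ₗ[GA G] (M × (Fin k → GA G))))
    (hC₂ : Module.Finite (GA G) C₂ ∧ StablyFree (GA G) C₂)
    (hC₁ : Module.Finite (GA G) C₁ ∧ StablyFree (GA G) C₁)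
    (hC₀ : Module.Finite (GA G) C₀ ∧ StablyFree (GA G) C₀)
    (f2 : M →ₗ[GA G] C₂) (g2 : C₂ →ₗ[GA G] C₁) (g1 : C₁ →ₗ[GA G] C₀)
    (e0 : C₀ →+ ℤ)
    (he0 : ∀ (r : GA G) (c : C₀), e0 (r • c) = augG G r * e0 c)
    (hinj : Function.Injective f2)
    (hex2 : LinearMap.range f2 = LinearMap.ker g2)
    (hex1 : LinearMap.range g2 = LinearMap.ker g1)
    (hex0 : ∀ c : C₀, c ∈ LinearMap.range g1 ↔ e0 c = 0)
    (hsurj : Function.Surjective e0) :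
    ∃ Q₂ : ModuleCat (GA G),
      Module.Finite (GA G) Q₂ ∧ StablyFree (GA G) Q₂ ∧
      ∃ (j2 : M' →ₗ[GA G] Q₂) (q : Q₂ →ₗ[GA G] C₁),
        Function.Injective j2 ∧
        LinearMap.range j2 = LinearMap.ker q ∧
        LinearMap.range q = LinearMap.ker g1 := by
  classical
  obtain ⟨e⟩ := hstab
  have hC2fin := hC₂.1
  let F : Type := Fin k → GA G
  let j : (M' × F) →ₗ[GA G] (C₂ × F) := (f2.prodMap LinearMap.id).comp e.toLinearMap
  let p : (C₂ × F) →ₗ[GA G] C₁ := g2.comp (LinearMap.fst (GA G) C₂ F)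
  have hjinj : Function.Injective j := by
    have h1 : Function.Injective (f2.prodMap (LinearMap.id : F →ₗ[GA G] F)) := by
      rw [LinearMap.coe_prodMap]
      exact Prod.map_injective.mpr ⟨hinj, fun a b h => h⟩
    exact h1.comp e.injective
  have hjval : ∀ w : M' × F, j w = (f2 (e w).1, (e w).2) := fun w => rfl
  have hpj : ∀ w : M' × F, p (j w) = 0 := by
    intro w
    show g2 ((j w).1) = 0
    rw [hjval]
    have : f2 (e w).1 ∈ LinearMap.ker g2 := hex2 ▸ LinearMap.mem_range_self f2 (e w).1
    exact this
  have hker : ∀ z : C₂ × F, p z = 0 ↔ z ∈ LinearMap.range j := by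
    intro z
    constructor
    · intro hz
      have hz1 : z.1 ∈ LinearMap.ker g2 := hz
      rw [← hex2] at hz1
      obtain ⟨m, hm⟩ := hz1
      refine ⟨e.symm (m, z.2), ?_⟩
      rw [hjval, e.apply_symm_apply]
      exact Prod.ext hm rfl
    · rintro ⟨w, rfl⟩; exact hpj w
  have hkerp : LinearMap.ker p = LinearMap.range j := by
    ext z
    simpa [LinearMap.mem_ker] using hker z
  -- torsion-freeness of C₁
  have hfreeGA : Module.Free ℤ (GA G) := Module.Free.of_equiv (gaEquiv (G := G)).symm
  obtain ⟨i1, n1, ⟨e1⟩⟩ := hC₁.2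
  have htf : ∀ (c : ℤ) (t : C₁), c • t = 0 → c = 0 ∨ t = 0 := by
    intro c t h
    by_cases hc : c = 0
    · exact Or.inl hc
    · refine Or.inr ?_
      have h2 : c • (e1 (t, 0)) = 0 := by
        rw [← map_zsmul e1 c (t, 0)]
        have : c • ((t, 0) : C₁ × (Fin i1 → GA G)) = (c • t, 0) := by
          simp [Prod.smul_mk]
        rw [this, h]
        simp
      have h3 : e1 (t, 0) = 0 := by
        rcases smul_eq_zero.mp h2 with h' | h'
        · exact absurd h' hc
        · exact h'
      have h4 : ((t, 0) : C₁ × (Fin i1 → GA G)) = 0 := e1.injective (by simpa using h3)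
      exact congrArg Prod.fst h4
  -- the additive retraction and the ℤG-linear retraction via averaging
  obtain ⟨s, hs⟩ := exists_add_retraction j hjinj p hkerp htf
  let tAdd : Fin k → ((C₂ × F) →+ GA G) := fun i =>
    (Pi.evalAddMonoidHom (fun _ : Fin k => GA G) i).comp
      ((AddMonoidHom.snd M' F).comp s)
  let r : (C₂ × F) →ₗ[GA G] F := LinearMap.pi (fun i => avgL (tAdd i))
  have hrj : ∀ w : M' × F, r (j w) = w.2 := by
    intro w
    funext i
    show avgL (tAdd i) (j w) = w.2 i
    rw [avgL_comp]
    have heq : (tAdd i).comp j.toAddMonoidHom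
        = ((LinearMap.proj i).comp (LinearMap.snd (GA G) M' F)).toAddMonoidHom := by
      refine AddMonoidHom.ext (fun w' => ?_)
      show ((s (j w')).2) i = w'.2 i
      rw [hs w']
    rw [heq, avgL_of_linear]
    rfl
  let ι : F →ₗ[GA G] (C₂ × F) := j.comp (LinearMap.inr (GA G) M' F)
  have hrι : ∀ x : F, r (ι x) = x := fun x => hrj (0, x)
  have hpι : ∀ x : F, p (ι x) = 0 := fun x => hpj (0, x)
  let ρ : (C₂ × F) →ₗ[GA G] (C₂ × F) := LinearMap.id - ι.comp r
  have hρval : ∀ z, ρ z = z - ι (r z) := fun z => rfl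
  have hrρ : ∀ z, r (ρ z) = 0 := by
    intro z
    rw [hρval, map_sub, hrι, sub_self]
  let KR := LinearMap.ker r
  let π2 : (C₂ × F) →ₗ[GA G] KR := ρ.codRestrict KR hrρ
  have hπ2val : ∀ z, (π2 z : C₂ × F) = z - ι (r z) := fun z => rfl
  have hπ2fix : ∀ z : KR, π2 (z : C₂ × F) = z := by
    intro z
    apply Subtype.ext
    rw [hπ2val, (show r (z : C₂ × F) = 0 from z.2), map_zero, sub_zero]
  have hpρ : ∀ z, p (ρ z) = p z := by
    intro z
    rw [hρval, map_sub, hpι, sub_zero]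
  -- the splitting equivalence C₂ × F ≃ KR × F
  let E : (C₂ × F) ≃ₗ[GA G] (KR × F) :=
    { toFun := fun z => (π2 z, r z)
      invFun := fun wx => (wx.1 : C₂ × F) + ι wx.2
      left_inv := by
        intro z
        show (π2 z : C₂ × F) + ι (r z) = z
        rw [hπ2val]
        abel
      right_inv := by
        rintro ⟨w, x⟩
        have hr : r ((w : C₂ × F) + ι x) = x := by
          rw [map_add, hrι, (show r (w : C₂ × F) = 0 from w.2), zero_add]
        have hπ : π2 ((w : C₂ × F) + ι x) = w := by
          apply Subtype.ext
          rw [hπ2val, hr]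
          have : (w : C₂ × F) + ι x - ι x = (w : C₂ × F) := by abel
          rw [this]
        exact Prod.ext hπ hr
      map_add' := by
        intro z z'
        exact Prod.ext (map_add π2 z z') (map_add r z z')
      map_smul' := by
        intro c z
        exact Prod.ext (map_smul π2 c z) (map_smul r c z) }
  -- finiteness of KR
  have hfinprod : Module.Finite (GA G) (C₂ × F) := Module.Finite.prod
  have hKRfin : Module.Finite (GA G) KR :=
    Module.Finite.of_surjective π2 (fun z => ⟨(z : C₂ × F), hπ2fix z⟩)
  -- stable freeness of KR
  obtain ⟨i2, n2, ⟨e2⟩⟩ := hC₂.2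
  have hKRsf : StablyFree (GA G) KR := by
    refine ⟨k + i2, n2 + k, ⟨?_⟩⟩
    exact (LinearEquiv.prodCongr (LinearEquiv.refl (GA G) ↥KR) (finProd k i2).symm) ≪≫ₗ
      ((LinearEquiv.prodAssoc (GA G) ↥KR F (Fin i2 → GA G)).symm) ≪≫ₗ
      (LinearEquiv.prodCongr E.symm (LinearEquiv.refl (GA G) (Fin i2 → GA G))) ≪≫ₗ
      (LinearEquiv.prodAssoc (GA G) C₂ F (Fin i2 → GA G)) ≪≫ₗ
      (LinearEquiv.prodCongr (LinearEquiv.refl (GA G) C₂)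
        (LinearEquiv.prodComm (GA G) F (Fin i2 → GA G))) ≪≫ₗ
      ((LinearEquiv.prodAssoc (GA G) C₂ (Fin i2 → GA G) F).symm) ≪≫ₗ
      (LinearEquiv.prodCongr e2 (LinearEquiv.refl (GA G) F)) ≪≫ₗ
      (finProd n2 k)
  -- the maps
  let j2 : M' →ₗ[GA G] KR := π2.comp (j.comp (LinearMap.inl (GA G) M' F))
  let q : KR →ₗ[GA G] C₁ := p.comp KR.subtype
  have hj2val : ∀ m : M', (j2 m : C₂ × F) = j (m, 0) := by
    intro m
    show (π2 (j (m, 0)) : C₂ × F) = j (m, 0)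
    rw [hπ2val, hrj, (show ((m, 0) : M' × F).2 = 0 from rfl), map_zero, sub_zero]
  have hj2inj : Function.Injective j2 := by
    intro m m' h
    have h1 : j (m, 0) = j (m', 0) := by rw [← hj2val, ← hj2val, h]
    have h2 : ((m, 0) : M' × F) = (m', 0) := hjinj h1
    exact congrArg Prod.fst h2
  have hqval : ∀ z : KR, q z = p (z : C₂ × F) := fun z => rfl
  have hrangej2 : LinearMap.range j2 = LinearMap.ker q := by
    ext z
    constructor
    · rintro ⟨m, rfl⟩
      show q (j2 m) = 0
      rw [hqval, hj2val]
      exact hpj (m, 0)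
    · intro hz
      have hz1 : p (z : C₂ × F) = 0 := hz
      obtain ⟨w, hw⟩ := (hker _).mp hz1
      have hw2 : w.2 = 0 := by
        have := hrj w
        rw [hw, (show r (z : C₂ × F) = 0 from z.2)] at this
        exact this.symm
      refine ⟨w.1, ?_⟩
      apply Subtype.ext
      rw [hj2val]
      have : ((w.1, 0) : M' × F) = w := by
        exact Prod.ext rfl hw2.symm
      rw [this, hw]
  have hrangeq : LinearMap.range q = LinearMap.ker g1 := by
    ext y
    constructor
    · rintro ⟨z, rfl⟩
      have : p (z : C₂ × F) ∈ LinearMap.range g2 := ⟨(z : C₂ × F).1, rfl⟩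
      rw [hex1] at this
      exact this
    · intro hy
      rw [← hex1] at hy
      obtain ⟨c, hc⟩ := hy
      refine ⟨π2 (c, 0), ?_⟩
      rw [hqval]
      show p (ρ (c, 0)) = y
      rw [hpρ]
      exact hc
  exact ⟨ModuleCat.of (GA G) KR, hKRfin, hKRsf, j2, q, hj2inj, hrangej2, hrangeq⟩
end
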